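/- Let E be a Banach space, X a Banach lattice, and T : E → X a bounded operator. Then there exists a unique lattice homomorphism T̂ : FBL[E] → X with T̂(δ_x) = T(x) for all x ∈ E, and moreover ||T̂|| = ||T||. -/

import Mathlib

open scoped ENNReal

noncomputable section

/-- `f : E* → ℝ` is positively homogeneous. -/
def PosHom {E : Type*} [NormedAddCommGroup E] [NormedSpace ℝ E]
    (f : StrongDual ℝ E → ℝ) : Prop :=
  ∀ (c : ℝ), 0 ≤ c → ∀ x, f (c • x) = c * f x

/-- A finite list of functionals `x_1*, …, x_n*` with `sup_{x ∈ B_E} Σ |x_k*(x)| ≤ 1`. -/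
def Admissible {E : Type*} [NormedAddCommGroup E] [NormedSpace ℝ E]
    (l : List (StrongDual ℝ E)) : Prop :=
  ∀ x : E, ‖x‖ ≤ 1 → (l.map (fun φ => |φ x|)).sum ≤ 1

/-- The free Banach lattice norm `‖f‖_{FBL[E]}` (possibly infinite). -/
def fblNorm {E : Type*} [NormedAddCommGroup E] [NormedSpace ℝ E]
    (f : StrongDual ℝ E → ℝ) : ℝ≥0∞ :=
  ⨆ l : {l : List (StrongDual ℝ E) // Admissible l},
    ENNReal.ofReal ((l.1.map (fun φ => |f φ|)).sum)

/-- The sublattice of `ℝ^{E*}` generated by the evaluations `δ_x`, `x ∈ E`. -/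
inductive GenLat (E : Type*) [NormedAddCommGroup E] [NormedSpace ℝ E] :
    (StrongDual ℝ E → ℝ) → Prop
  | delta (x : E) : GenLat E (fun φ => φ x)
  | add {f g} : GenLat E f → GenLat E g → GenLat E (f + g)
  | smul (c : ℝ) {f} : GenLat E f → GenLat E (c • f)
  | sup {f g} : GenLat E f → GenLat E g → GenLat E (f ⊔ g)

/-- Membership in `FBL[E]`: the `‖·‖_{FBL[E]}`-closure of the sublattice generated by
the evaluations `δ_x`. -/
def FBLMem {E : Type*} [NormedAddCommGroup E] [NormedSpace ℝ E]
    (f : StrongDual ℝ E → ℝ) : Prop :=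
  ∀ ε : ℝ, 0 < ε → ∃ g, GenLat E g ∧ fblNorm (f - g) ≤ ENNReal.ofReal ε

set_option linter.unusedSectionVars false
set_option linter.unusedVariables false
set_option maxHeartbeats 1000000
open Filter Topology

lemma sup_eq_max {α : Type*} [LinearOrder α] (a b : α) : a ⊔ b = max a b := rfl


namespace S18

/-- fold-sup of a list with a default head element: sup of `{a} ∪ A`. -/
def fsup {Y : Type*} [SemilatticeSup Y] (a : Y) (A : List Y) : Y := A.foldr (· ⊔ ·) a

section Sup
variable {Y : Type*} [SemilatticeSup Y]

@[simp] lemma fsup_nil (a : Y) : fsup a ([] : List Y) = a := rfl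

@[simp] lemma fsup_cons (a x : Y) (A : List Y) : fsup a (x :: A) = x ⊔ fsup a A := rfl

lemma fsup_le_iff {a c : Y} {A : List Y} :
    fsup a A ≤ c ↔ a ≤ c ∧ ∀ x ∈ A, x ≤ c := by
  induction A with
  | nil => simp
  | cons x A ih => simp [sup_le_iff, ih]; tauto

lemma le_fsup_self (a : Y) (A : List Y) : a ≤ fsup a A := (fsup_le_iff.mp le_rfl).1

lemma le_fsup_of_mem {a x : Y} {A : List Y} (h : x ∈ A) : x ≤ fsup a A :=
  (fsup_le_iff.mp le_rfl).2 x h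

lemma le_fsup_of_mem_cons {a x : Y} {A : List Y} (h : x ∈ a :: A) : x ≤ fsup a A := by
  rcases List.mem_cons.mp h with rfl | h
  exacts [le_fsup_self _ _, le_fsup_of_mem h]

lemma fsup_sup (a b : Y) (A B : List Y) :
    fsup a A ⊔ fsup b B = fsup a (b :: (A ++ B)) := by
  apply le_antisymm
  · refine sup_le (fsup_le_iff.mpr ?_) (fsup_le_iff.mpr ?_)
    · exact ⟨le_fsup_self _ _, fun x hx => le_fsup_of_mem (by simp [hx])⟩
    · exact ⟨le_fsup_of_mem (by simp), fun x hx => le_fsup_of_mem (by simp [hx])⟩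
  · refine fsup_le_iff.mpr ⟨le_sup_of_le_left (le_fsup_self _ _), ?_⟩
    rintro x hx
    rcases List.mem_cons.mp hx with rfl | hx
    · exact le_sup_of_le_right (le_fsup_self _ _)
    · rcases List.mem_append.mp hx with hx | hx
      · exact le_sup_of_le_left (le_fsup_of_mem hx)
      · exact le_sup_of_le_right (le_fsup_of_mem hx)

/-- Evaluation of a pointwise fold-sup of functions. -/
lemma fsup_apply {ι : Type*} (F : ι → Y) (L : List (ι → Y)) (i : ι) :
    fsup F L i = fsup (F i) (L.map (fun g => g i)) := by
  induction L with
  | nil => rfl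
  | cons g L ih => simp [Pi.sup_apply, ih]

end Sup

/-- all pairwise sums of `a :: A` and `b :: B`, except the head `a + b`. -/
def addL {α : Type*} [Add α] (a : α) (A : List α) (b : α) (B : List α) : List α :=
  A.map (· + b) ++ ((a :: A).flatMap fun x => B.map fun y => x + y)

lemma mem_addL_iff {α : Type*} [Add α] {a b z : α} {A B : List α} :
    z ∈ (a + b) :: addL a A b B ↔ ∃ x ∈ a :: A, ∃ y ∈ b :: B, z = x + y := by
  simp only [addL, List.mem_cons, List.mem_append, List.mem_map, List.mem_flatMap]
  constructor
  · rintro (rfl | ⟨x, hx, rfl⟩ | ⟨x, hx, y, hy, rfl⟩)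
    · exact ⟨a, by simp, b, by simp, rfl⟩
    · exact ⟨x, by simp [hx], b, by simp, rfl⟩
    · exact ⟨x, by simpa using hx, y, by simp [hy], rfl⟩
  · rintro ⟨x, hx, y, hy, rfl⟩
    rcases hx with rfl | hx <;> rcases hy with rfl | hy <;> aesop

section Group
variable {Y : Type*} [Lattice Y] [AddCommGroup Y] [CovariantClass Y Y (· + ·) (· ≤ ·)]
  [CovariantClass Y Y (Function.swap (· + ·)) (· ≤ ·)]

lemma fsup_add_fsup (a b : Y) (A B : List Y) :
    fsup a A + fsup b B = fsup (a + b) (addL a A b B) := by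
  have key : ∀ x ∈ a :: A, ∀ y ∈ b :: B, x + y ≤ fsup (a + b) (addL a A b B) := fun x hx y hy =>
    le_fsup_of_mem_cons (mem_addL_iff.mpr ⟨x, hx, y, hy, rfl⟩)
  apply le_antisymm
  · rw [← le_sub_iff_add_le]
    refine fsup_le_iff.mpr ⟨?_, fun x hx => ?_⟩
    · rw [le_sub_iff_add_le, add_comm, ← le_sub_iff_add_le]
      refine fsup_le_iff.mpr ⟨?_, fun y hy => ?_⟩ <;> rw [le_sub_iff_add_le, add_comm]
      · exact key a (by simp) b (by simp)
      · exact key a (by simp) y (by simp [hy])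
    · rw [le_sub_iff_add_le, add_comm, ← le_sub_iff_add_le]
      refine fsup_le_iff.mpr ⟨?_, fun y hy => ?_⟩ <;> rw [le_sub_iff_add_le, add_comm]
      · exact key x (by simp [hx]) b (by simp)
      · exact key x (by simp [hx]) y (by simp [hy])
  · refine fsup_le_iff.mpr ⟨add_le_add (le_fsup_self _ _) (le_fsup_self _ _), fun z hz => ?_⟩
    obtain ⟨x, hx, y, hy, rfl⟩ := mem_addL_iff.mp (List.mem_cons_of_mem _ hz)
    exact add_le_add (le_fsup_of_mem_cons hx) (le_fsup_of_mem_cons hy)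

end Group
section SmulOrder
variable {X : Type*} [NormedAddCommGroup X] [Lattice X] [HasSolidNorm X] [IsOrderedAddMonoid X] [NormedSpace ℝ X]

lemma disj_add {a b g : X} (ha : 0 ≤ a) (hb : 0 ≤ b) (hg : 0 ≤ g)
    (h1 : a ⊓ g = 0) (h2 : b ⊓ g = 0) : (a + b) ⊓ g = 0 := by
  have e : (a ⊓ g) + (b ⊓ g) = ((a + b) ⊓ (g + b)) ⊓ ((a + g) ⊓ (g + g)) := by
    rw [inf_add a g (b ⊓ g), add_inf b g a, add_inf b g g]
    ac_rfl
  have upper : (a + b) ⊓ g ≤ (a ⊓ g) + (b ⊓ g) := by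
    rw [e]
    exact le_inf (le_inf inf_le_left (inf_le_right.trans (le_add_of_nonneg_right hb)))
      (le_inf (inf_le_right.trans (le_add_of_nonneg_left ha))
        (inf_le_right.trans (le_add_of_nonneg_left hg)))
  rw [h1, h2, add_zero] at upper
  exact le_antisymm upper (le_inf (add_nonneg ha hb) hg)

lemma disj_nsmul (z : X) : ∀ n : ℕ, (n • z⁺) ⊓ z⁻ = 0
  | 0 => by rw [zero_smul]; exact inf_eq_left.mpr (negPart_nonneg z)
  | (n + 1) => by
      rw [succ_nsmul]
      exact disj_add (nsmul_nonneg (posPart_nonneg z) n) (posPart_nonneg z) (negPart_nonneg z)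
        (disj_nsmul z n) (posPart_inf_negPart_eq_zero z)

lemma nonneg_of_nsmul {n : ℕ} (hn : 0 < n) {z : X} (h : 0 ≤ n • z) : 0 ≤ z := by
  have hsub : n • z = n • z⁺ - n • z⁻ := by rw [← nsmul_sub, posPart_sub_negPart]
  have h1 : n • z⁻ ≤ n • z⁺ := sub_nonneg.mp (by rwa [hsub] at h)
  obtain ⟨m, rfl⟩ : ∃ m, n = m + 1 := ⟨n - 1, (Nat.succ_pred_eq_of_pos hn).symm⟩
  have h2 : z⁻ ≤ (m + 1) • z⁻ := by
    rw [succ_nsmul]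
    exact le_add_of_nonneg_left (nsmul_nonneg (negPart_nonneg z) m)
  have h3 : z⁻ ≤ ((m + 1) • z⁺) ⊓ z⁻ := le_inf (h2.trans h1) le_rfl
  rw [disj_nsmul z (m + 1)] at h3
  have hzneg : z⁻ = 0 := le_antisymm h3 (negPart_nonneg z)
  have := posPart_sub_negPart z
  rw [hzneg, sub_zero] at this
  rw [← this]
  exact posPart_nonneg z

lemma smul_nonneg'' {c : ℝ} (hc : 0 ≤ c) {x : X} (hx : 0 ≤ x) : 0 ≤ c • x := by
  have hq : ∀ q : ℚ, 0 ≤ q → 0 ≤ (q : ℝ) • x := by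
    intro q hq0
    have hden : (0 : ℝ) < (q.den : ℝ) := by exact_mod_cast q.pos
    set z := ((q.den : ℝ))⁻¹ • x with hz
    have hzz : (q.den : ℕ) • z = x := by
      rw [← Nat.cast_smul_eq_nsmul ℝ, hz, smul_smul, mul_inv_cancel₀ hden.ne', one_smul]
    have hz0 : 0 ≤ z := nonneg_of_nsmul q.pos (by rw [hzz]; exact hx)
    have key : (q : ℝ) • x = (q.num.toNat : ℕ) • z := by
      rw [← Nat.cast_smul_eq_nsmul ℝ, hz, smul_smul]
      congr 1
      rw [Rat.cast_def]
      have hnum : (q.num.toNat : ℤ) = q.num := Int.toNat_of_nonneg (Rat.num_nonneg.mpr hq0)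
      rw [show ((q.num.toNat : ℕ) : ℝ) = (q.num : ℝ) by exact_mod_cast congrArg (fun i : ℤ => (i : ℝ)) hnum]
      field_simp
    rw [key]
    exact nsmul_nonneg hz0 _
  choose qs hq1 hq2 using fun n : ℕ => exists_rat_btwn (show c < c + 1 / (n + 1) from lt_add_of_pos_right c (by positivity))
  have hlim : Tendsto (fun n : ℕ => ((qs n : ℝ))) atTop (𝓝 c) := by
    have hub : Tendsto (fun n : ℕ => c + 1 / ((n : ℝ) + 1)) atTop (𝓝 (c + 0)) :=
      tendsto_const_nhds.add tendsto_one_div_add_atTop_nhds_zero_nat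
    rw [add_zero] at hub
    exact tendsto_of_tendsto_of_tendsto_of_le_of_le tendsto_const_nhds hub
      (fun n => (hq1 n).le) (fun n => (hq2 n).le)
  have hsm : Tendsto (fun n : ℕ => ((qs n : ℝ)) • x) atTop (𝓝 (c • x)) := hlim.smul_const x
  exact isClosed_nonneg.mem_of_tendsto hsm
    (Filter.Eventually.of_forall fun n => hq _ (by exact_mod_cast (hc.trans (hq1 n).le)))

lemma smul_le_smul'' {c : ℝ} (hc : 0 ≤ c) {x y : X} (h : x ≤ y) : c • x ≤ c • y := by
  have := smul_nonneg'' hc (sub_nonneg.mpr h)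
  rw [smul_sub] at this
  exact sub_nonneg.mp this

lemma smul_sup'' {c : ℝ} (hc : 0 ≤ c) (x y : X) : c • (x ⊔ y) = c • x ⊔ c • y := by
  rcases eq_or_lt_of_le hc with rfl | hcpos
  · simp
  · apply le_antisymm
    · have h1 : x ⊔ y ≤ c⁻¹ • (c • x ⊔ c • y) := by
        refine sup_le ?_ ?_
        · have := smul_le_smul'' (inv_nonneg.mpr hc) (le_sup_left : c • x ≤ c • x ⊔ c • y)
          rwa [inv_smul_smul₀ hcpos.ne'] at this
        · have := smul_le_smul'' (inv_nonneg.mpr hc) (le_sup_right : c • y ≤ c • x ⊔ c • y)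
          rwa [inv_smul_smul₀ hcpos.ne'] at this
      have := smul_le_smul'' hc h1
      rwa [smul_inv_smul₀ hcpos.ne'] at this
    · exact sup_le (smul_le_smul'' hc le_sup_left) (smul_le_smul'' hc le_sup_right)

lemma smul_posPart'' {c : ℝ} (hc : 0 ≤ c) (x : X) : (c • x)⁺ = c • x⁺ := by
  have : x⁺ = x ⊔ 0 := rfl
  rw [show (c • x)⁺ = (c • x) ⊔ 0 from rfl, this, smul_sup'' hc, smul_zero]

end SmulOrder

structure Rep (E : Type*) where
  a : E
  A : List E
  b : E
  B : List E

section RepDefs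
variable {E : Type*} [AddCommGroup E] [Module ℝ E]

def Rep.nega (r : Rep E) : Rep E := ⟨r.b, r.B, r.a, r.A⟩

def Rep.addR (r s : Rep E) : Rep E :=
  ⟨r.a + s.a, addL r.a r.A s.a s.A, r.b + s.b, addL r.b r.B s.b s.B⟩

def Rep.supR (r s : Rep E) : Rep E :=
  ⟨r.a + s.b, (s.a + r.b) :: (addL r.a r.A s.b s.B ++ addL s.a s.A r.b r.B),
   r.b + s.b, addL r.b r.B s.b s.B⟩

def Rep.smulR (c : ℝ) (r : Rep E) : Rep E :=
  ⟨c • r.a, r.A.map (c • ·), c • r.b, r.B.map (c • ·)⟩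

def Rep.delta (x : E) : Rep E := ⟨x, [], 0, []⟩

def Rep.subR (r s : Rep E) : Rep E := r.addR s.nega

def Rep.absR (r : Rep E) : Rep E := r.supR r.nega

end RepDefs

section Interp
variable {E : Type*} [AddCommGroup E] [Module ℝ E]
variable {Y : Type*} [Lattice Y] [AddCommGroup Y] [CovariantClass Y Y (· + ·) (· ≤ ·)]
  [CovariantClass Y Y (Function.swap (· + ·)) (· ≤ ·)]

/-- Interpretation of a representation under a map `S : E → Y`. -/
def Rep.interp (S : E → Y) (r : Rep E) : Y :=
  fsup (S r.a) (r.A.map S) - fsup (S r.b) (r.B.map S)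

lemma fsup_congr_mem {a : Y} {L1 L2 : List Y} (h : ∀ z, z ∈ a :: L1 ↔ z ∈ a :: L2) :
    fsup a L1 = fsup a L2 := by
  apply le_antisymm
  · exact fsup_le_iff.mpr ⟨le_fsup_self _ _, fun x hx =>
      le_fsup_of_mem_cons ((h x).mp (List.mem_cons_of_mem _ hx))⟩
  · exact fsup_le_iff.mpr ⟨le_fsup_self _ _, fun x hx =>
      le_fsup_of_mem_cons ((h x).mpr (List.mem_cons_of_mem _ hx))⟩

variable {S : E → Y} (hS : ∀ x y, S (x + y) = S x + S y)

include hS in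
lemma fsup_add_hom (a b : E) (A B : List E) :
    fsup (S a) (A.map S) + fsup (S b) (B.map S) =
      fsup (S (a + b)) ((addL a A b B).map S) := by
  rw [hS, fsup_add_fsup]
  apply fsup_congr_mem
  intro z
  rw [mem_addL_iff]
  constructor
  · rintro ⟨x, hx, y, hy, rfl⟩
    rw [← List.map_cons] at hx hy
    obtain ⟨p, hp, rfl⟩ := List.mem_map.mp hx
    obtain ⟨q, hq, rfl⟩ := List.mem_map.mp hy
    rw [← hS, ← hS, ← List.map_cons]
    exact List.mem_map.mpr ⟨p + q, mem_addL_iff.mpr ⟨p, hp, q, hq, rfl⟩, rfl⟩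
  · intro hz
    rw [← hS, ← List.map_cons] at hz
    obtain ⟨w, hw, rfl⟩ := List.mem_map.mp hz
    obtain ⟨p, hp, q, hq, rfl⟩ := mem_addL_iff.mp hw
    refine ⟨S p, ?_, S q, ?_, hS p q⟩
    · rw [← List.map_cons]; exact List.mem_map.mpr ⟨p, hp, rfl⟩
    · rw [← List.map_cons]; exact List.mem_map.mpr ⟨q, hq, rfl⟩

include hS in
lemma Rep.interp_nega (r : Rep E) : (r.nega).interp S = - r.interp S := by
  simp [Rep.interp, Rep.nega, neg_sub]

include hS in
lemma Rep.interp_add (r s : Rep E) :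
    (r.addR s).interp S = r.interp S + s.interp S := by
  unfold Rep.interp Rep.addR
  rw [← fsup_add_hom hS, ← fsup_add_hom hS]
  abel

lemma sub_sup_sub (p q p' q' : Y) :
    (p - q) ⊔ (p' - q') = ((p + q') ⊔ (p' + q)) - (q + q') := by
  rw [eq_sub_iff_add_eq, sup_add]
  congr 1 <;> abel

include hS in
lemma Rep.interp_sup (r s : Rep E) :
    (r.supR s).interp S = r.interp S ⊔ s.interp S := by
  unfold Rep.interp Rep.supR
  rw [sub_sup_sub]
  congr 1
  · simp only [List.map_cons, List.map_append]
    rw [← fsup_sup, ← fsup_add_hom hS, ← fsup_add_hom hS]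
  · rw [← fsup_add_hom hS]

variable [Module ℝ Y]

lemma smul_fsup {c : ℝ} (hY : ∀ p q : Y, c • (p ⊔ q) = c • p ⊔ c • q) (y : Y) (L : List Y) :
    c • fsup y L = fsup (c • y) (L.map (c • ·)) := by
  induction L with
  | nil => rfl
  | cons z L ih => simp [hY, ih]

lemma Rep.interp_smul {c : ℝ} (hS_smul : ∀ x : E, S (c • x) = c • S x)
    (hY : ∀ p q : Y, c • (p ⊔ q) = c • p ⊔ c • q) (r : Rep E) :
    (r.smulR c).interp S = c • r.interp S := by
  have hpart : ∀ (v : E) (V : List E),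
      fsup (S (c • v)) ((V.map (c • ·)).map S) = c • fsup (S v) (V.map S) := by
    intro v V
    rw [smul_fsup hY, hS_smul, List.map_map, List.map_map]
    congr 1
    apply List.map_congr_left
    intro x _
    simp [Function.comp, hS_smul]
  unfold Rep.interp Rep.smulR
  rw [hpart, hpart, smul_sub]

lemma Rep.interp_delta (hS0 : S 0 = 0) (x : E) : (Rep.delta x).interp S = S x := by
  simp [Rep.interp, Rep.delta, hS0]

end Interp
section HB
variable {X : Type*} [NormedAddCommGroup X] [Lattice X] [HasSolidNorm X] [IsOrderedAddMonoid X] [NormedSpace ℝ X]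

/-- positivity of a linear functional -/
def IsPos (y : X →ₗ[ℝ] ℝ) : Prop := ∀ x : X, 0 ≤ x → 0 ≤ y x

lemma IsPos.mono {y : X →ₗ[ℝ] ℝ} (hy : IsPos y) {a b : X} (h : a ≤ b) : y a ≤ y b := by
  have := hy _ (sub_nonneg.mpr h)
  rw [map_sub] at this
  linarith

lemma IsPos.abs_apply_le {y : X →ₗ[ℝ] ℝ} (hy : IsPos y) (x : X) : |y x| ≤ y |x| := by
  refine abs_le.mpr ⟨?_, hy.mono (le_abs_self x)⟩
  have h0 : (0 : X) ≤ |x| + x := by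
    calc (0 : X) = -x + x := by abel
    _ ≤ |x| + x := add_le_add_left (neg_le_abs x) x
  have := hy _ h0
  rw [map_add] at this
  linarith

lemma posPart_add_le' (a b : X) : (a + b)⁺ ≤ a⁺ + b⁺ :=
  sup_le (add_le_add (le_posPart a) (le_posPart b))
    (add_nonneg (posPart_nonneg a) (posPart_nonneg b))

lemma dec2 (y : X →ₗ[ℝ] ℝ) (hy : IsPos y) (u v : X) :
    ∃ y1 y2 : X →ₗ[ℝ] ℝ, IsPos y1 ∧ IsPos y2 ∧ (∀ w, y1 w + y2 w = y w) ∧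
      y1 u + y2 v = y (u ⊔ v) := by
  by_cases h0 : ((u, v) : X × X) = 0
  · obtain ⟨hu, hv⟩ := Prod.ext_iff.mp h0
    subst hu; subst hv
    exact ⟨y, 0, hy, fun x _ => le_rfl, fun w => by simp, by simp⟩
  · set N : X × X → ℝ := fun p => y (p.1 ⊔ p.2) with hN
    have N_hom : ∀ c : ℝ, 0 < c → ∀ p : X × X, N (c • p) = c * N p := by
      intro c hc p
      simp only [hN, Prod.smul_fst, Prod.smul_snd]
      rw [← smul_sup'' hc.le, map_smul, smul_eq_mul]
    have N_add : ∀ p q : X × X, N (p + q) ≤ N p + N q := by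
      intro p q
      have h1 : (p.1 + q.1) ⊔ (p.2 + q.2) ≤ (p.1 ⊔ p.2) + (q.1 ⊔ q.2) :=
        sup_le (add_le_add le_sup_left le_sup_left) (add_le_add le_sup_right le_sup_right)
      have h2 := hy.mono h1
      rw [map_add] at h2
      simpa [hN] using h2
    have H : ∀ c : ℝ, c • ((u, v) : X × X) = 0 → c • y (u ⊔ v) = 0 := by
      intro c hc
      rcases smul_eq_zero.mp hc with rfl | hc
      · simp
      · exact absurd hc h0
    have hf : ∀ p : (LinearPMap.mkSpanSingleton' (R := ℝ) (σ := RingHom.id ℝ) ((u, v) : X × X) (y (u ⊔ v)) H).domain,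
        (LinearPMap.mkSpanSingleton' (R := ℝ) (σ := RingHom.id ℝ) ((u, v) : X × X) (y (u ⊔ v)) H) p ≤ N p := by
      rintro ⟨pv, hp⟩
      obtain ⟨c, hc⟩ := Submodule.mem_span_singleton.mp
        ((LinearPMap.domain_mkSpanSingleton (σ := RingHom.id ℝ) ((u, v) : X × X) (y (u ⊔ v)) H) ▸ hp)
      subst hc
      rw [LinearPMap.mkSpanSingleton'_apply]
      show c • y (u ⊔ v) ≤ N (c • ((u, v) : X × X))
      rcases lt_trichotomy c 0 with hc2 | rfl | hc2
      · have hrw : c • ((u, v) : X × X) = (-c) • ((-u, -v) : X × X) := by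
          simp [Prod.ext_iff]
        rw [hrw, N_hom (-c) (by linarith)]
        have hkey : 0 ≤ y (u ⊔ v) + y ((-u) ⊔ (-v)) := by
          rw [← map_add]
          refine hy _ ?_
          have h00 : (0 : X) = u + (-u) := by abel
          rw [h00]
          exact add_le_add le_sup_left le_sup_left
        have hNv : N ((-u, -v) : X × X) = y ((-u) ⊔ (-v)) := rfl
        rw [hNv, smul_eq_mul]
        nlinarith
      · simp [N]
      · rw [N_hom c hc2, smul_eq_mul]
    obtain ⟨g, hg1, hg2⟩ := exists_extension_of_le_sublinear _ N N_hom N_add hf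
    refine ⟨g.comp (LinearMap.inl ℝ X X), g.comp (LinearMap.inr ℝ X X), ?_, ?_, ?_, ?_⟩
    · intro x hx
      have hgv := hg2 (-x, 0)
      have hsup : ((-x) ⊔ (0 : X)) = 0 := sup_eq_right.mpr (neg_nonpos.mpr hx)
      simp only [hN, hsup, map_zero] at hgv
      have hneg : ((-x, 0) : X × X) = -(x, 0) := by simp [Prod.ext_iff]
      rw [hneg, map_neg] at hgv
      simpa using (by linarith : (0:ℝ) ≤ g (x, 0))
    · intro x hx
      have hgv := hg2 (0, -x)
      have hsup : ((0 : X) ⊔ (-x)) = 0 := sup_eq_left.mpr (neg_nonpos.mpr hx)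
      simp only [hN, hsup, map_zero] at hgv
      have hneg : ((0, -x) : X × X) = -(0, x) := by simp [Prod.ext_iff]
      rw [hneg, map_neg] at hgv
      simpa using (by linarith : (0:ℝ) ≤ g (0, x))
    · intro w
      have h1 : g (w, w) ≤ y w := by
        have := hg2 (w, w)
        simpa [hN] using this
      have h2 : -(g (w, w)) ≤ -(y w) := by
        have hgv := hg2 (-w, -w)
        have hneg : ((-w, -w) : X × X) = -(w, w) := by simp [Prod.ext_iff]
        rw [hneg, map_neg] at hgv
        simpa [hN] using hgv
      have hval : g (w, w) = y w := le_antisymm h1 (by linarith)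
      have hsplit : ((w, w) : X × X) = (w, 0) + (0, w) := by simp [Prod.ext_iff]
      rw [hsplit, map_add] at hval
      simpa using hval
    · have hmem : ((u, v) : X × X) ∈
          (LinearPMap.mkSpanSingleton' (R := ℝ) (σ := RingHom.id ℝ) ((u, v) : X × X) (y (u ⊔ v)) H).domain := by
        rw [LinearPMap.domain_mkSpanSingleton]
        exact Submodule.mem_span_singleton_self _
      have hval := hg1 ⟨(u, v), hmem⟩
      rw [LinearPMap.mkSpanSingleton'_apply_self] at hval
      have hval' : g (u, v) = y (u ⊔ v) := hval
      have hsplit : ((u, v) : X × X) = (u, 0) + (0, v) := by simp [Prod.ext_iff]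
      rw [hsplit, map_add] at hval'
      simpa using hval'

lemma dec (y : X →ₗ[ℝ] ℝ) (hy : IsPos y) (v : X) (V : List X) :
    ∃ (y0 : X →ₗ[ℝ] ℝ) (ys : List (X →ₗ[ℝ] ℝ)),
      ys.length = V.length ∧ IsPos y0 ∧ (∀ z ∈ ys, IsPos z) ∧
      (∀ w, y0 w + ((ys.map (fun z => z w)).sum) = y w) ∧
      y0 v + ((ys.zip V).map (fun p => p.1 p.2)).sum = y (fsup v V) := by
  induction V generalizing y with
  | nil => exact ⟨y, [], rfl, hy, by simp, by simp, by simp⟩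
  | cons w V ih =>
    obtain ⟨y1, y2, h1, h2, hsum, hval⟩ := dec2 y hy w (fsup v V)
    obtain ⟨y0, ys, hlen, hy0, hys, hsum2, hval2⟩ := ih y2 h2
    refine ⟨y0, y1 :: ys, by simp [hlen], hy0, ?_, ?_, ?_⟩
    · intro z hz
      rcases List.mem_cons.mp hz with rfl | hz
      exacts [h1, hys z hz]
    · intro w'
      have ha := hsum2 w'
      have hb := hsum w'
      simp only [List.map_cons, List.sum_cons]
      linarith
    · simp only [List.zip_cons_cons, List.map_cons, List.sum_cons, fsup_cons]
      linarith

lemma norming (v : X) (hv : 0 ≤ v) :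
    ∃ y : X →ₗ[ℝ] ℝ, IsPos y ∧ (∀ x, y x ≤ ‖x‖) ∧ y v = ‖v‖ := by
  by_cases h0 : v = 0
  · exact ⟨0, fun x _ => le_rfl, fun x => by simpa using norm_nonneg x, by simp [h0]⟩
  · set N : X → ℝ := fun w => ‖w⁺‖ with hN
    have N_hom : ∀ c : ℝ, 0 < c → ∀ w : X, N (c • w) = c * N w := by
      intro c hc w
      simp only [hN]
      rw [smul_posPart'' hc.le, norm_smul, Real.norm_eq_abs, abs_of_pos hc]
    have N_add : ∀ w w' : X, N (w + w') ≤ N w + N w' := by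
      intro w w'
      have h1 : ‖(w + w')⁺‖ ≤ ‖w⁺ + w'⁺‖ := by
        apply norm_le_norm_of_abs_le_abs
        rw [abs_of_nonneg (posPart_nonneg _),
          abs_of_nonneg (add_nonneg (posPart_nonneg w) (posPart_nonneg w'))]
        exact posPart_add_le' w w'
      exact h1.trans (norm_add_le _ _)
    have H : ∀ c : ℝ, c • v = 0 → c • ‖v‖ = 0 := by
      intro c hc
      rcases smul_eq_zero.mp hc with rfl | hc
      · simp
      · exact absurd hc h0
    have hf : ∀ p : (LinearPMap.mkSpanSingleton' (R := ℝ) (σ := RingHom.id ℝ) v ‖v‖ H).domain,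
        (LinearPMap.mkSpanSingleton' (R := ℝ) (σ := RingHom.id ℝ) v ‖v‖ H) p ≤ N p := by
      rintro ⟨pv, hp⟩
      obtain ⟨c, hc⟩ := Submodule.mem_span_singleton.mp
        ((LinearPMap.domain_mkSpanSingleton (σ := RingHom.id ℝ) v ‖v‖ H) ▸ hp)
      subst hc
      rw [LinearPMap.mkSpanSingleton'_apply]
      show c • ‖v‖ ≤ N (c • v)
      rcases lt_trichotomy c 0 with hc2 | rfl | hc2
      · have hle : c • ‖v‖ ≤ 0 := by
          rw [smul_eq_mul]
          exact mul_nonpos_of_nonpos_of_nonneg hc2.le (norm_nonneg v)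
        exact hle.trans (norm_nonneg _)
      · simp [N]
      · rw [N_hom c hc2, smul_eq_mul]
        have hNv : N v = ‖v‖ := by
          simp only [hN]
          rw [posPart_eq_self.mpr hv]
        rw [hNv]
    obtain ⟨g, hg1, hg2⟩ := exists_extension_of_le_sublinear _ N N_hom N_add hf
    refine ⟨g, ?_, ?_, ?_⟩
    · intro x hx
      have hgv := hg2 (-x)
      have hpp : (-x)⁺ = 0 := posPart_eq_zero.mpr (neg_nonpos.mpr hx)
      rw [map_neg] at hgv
      simp only [hN, hpp, norm_zero] at hgv
      linarith
    · intro x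
      refine (hg2 x).trans ?_
      simp only [hN]
      apply norm_le_norm_of_abs_le_abs
      rw [abs_of_nonneg (posPart_nonneg x)]
      exact sup_le (le_abs_self x) (abs_nonneg x)
    · have hmem : v ∈ (LinearPMap.mkSpanSingleton' (R := ℝ) (σ := RingHom.id ℝ) v ‖v‖ H).domain := by
        rw [LinearPMap.domain_mkSpanSingleton]
        exact Submodule.mem_span_singleton_self _
      have hval := hg1 ⟨v, hmem⟩
      rw [LinearPMap.mkSpanSingleton'_apply_self] at hval
      exact hval

end HB
section Main
open NormedSpace

variable {E : Type*} [NormedAddCommGroup E] [NormedSpace ℝ E]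

/-- the evaluation map `δ`. -/
def dm (x : E) : StrongDual ℝ E → ℝ := fun φ => φ x

lemma dm_add (x y : E) : dm (x + y) = dm x + dm (E := E) y := by
  funext φ; simp [dm]

lemma dm_smul (c : ℝ) (x : E) : dm (c • x) = c • dm (E := E) x := by
  funext φ; simp [dm]

lemma dm_zero : dm (0 : E) = 0 := by funext φ; simp [dm]

lemma real_smul_sup (c : ℝ) (hc : 0 ≤ c) (p q : ℝ) : c • (p ⊔ q) = c • p ⊔ c • q := by
  simp only [smul_eq_mul, sup_eq_max]
  exact mul_max_of_nonneg p q hc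

lemma pi_smul_sup {ι : Type*} (c : ℝ) (hc : 0 ≤ c) (p q : ι → ℝ) :
    c • (p ⊔ q) = c • p ⊔ c • q := by
  funext i
  simp only [Pi.smul_apply, Pi.sup_apply]
  exact real_smul_sup c hc _ _

lemma interp_dm_apply (r : Rep E) (φ : StrongDual ℝ E) :
    r.interp dm φ = fsup (φ r.a) (r.A.map φ) - fsup (φ r.b) (r.B.map φ) := by
  rw [Rep.interp, Pi.sub_apply, fsup_apply, fsup_apply, List.map_map, List.map_map]
  rfl

lemma fsup_mul_left (c : ℝ) (hc : 0 ≤ c) (t : ℝ) (L : List ℝ) :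
    c * fsup t L = fsup (c * t) (L.map (c * ·)) := by
  have := smul_fsup (Y := ℝ) (c := c) (fun p q => real_smul_sup c hc p q) t L
  simpa [smul_eq_mul] using this

lemma interp_dm_poshom (r : Rep E) {c : ℝ} (hc : 0 ≤ c) (φ : StrongDual ℝ E) :
    r.interp dm (c • φ) = c * r.interp dm φ := by
  rw [interp_dm_apply, interp_dm_apply, mul_sub]
  have hlist : ∀ V : List E, V.map (⇑(c • φ)) = (V.map ⇑φ).map (c * ·) := by
    intro V
    rw [List.map_map]
    apply List.map_congr_left
    intro x _
    simp [mul_comm]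
  congr 1 <;> rw [fsup_mul_left c hc, ← hlist] <;> congr 1 <;> simp

/-- the sum `Σ_{φ ∈ l} |f φ|`. -/
def sumAbs (f : StrongDual ℝ E → ℝ) (l : List (StrongDual ℝ E)) : ℝ := (l.map fun φ => |f φ|).sum

lemma sumAbs_nonneg (f : StrongDual ℝ E → ℝ) (l : List (StrongDual ℝ E)) : 0 ≤ sumAbs f l := by
  apply List.sum_nonneg
  intro x hx
  obtain ⟨φ, _, rfl⟩ := List.mem_map.mp hx
  exact abs_nonneg _

lemma sum_map_add {α : Type*} (l : List α) (f g : α → ℝ) :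
    (l.map fun x => f x + g x).sum = (l.map f).sum + (l.map g).sum := by
  induction l with
  | nil => simp
  | cons x l ih => simp [ih]; ring

lemma sum_map_mul {α : Type*} (l : List α) (c : ℝ) (f : α → ℝ) :
    (l.map fun x => c * f x).sum = c * (l.map f).sum := by
  induction l with
  | nil => simp
  | cons x l ih => simp [ih]; ring

lemma sumAbs_le_add {u v w : StrongDual ℝ E → ℝ} (h : ∀ φ, |u φ| ≤ |v φ| + |w φ|)
    (l : List (StrongDual ℝ E)) : sumAbs u l ≤ sumAbs v l + sumAbs w l := by
  rw [sumAbs, sumAbs, sumAbs, ← sum_map_add]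
  exact List.sum_le_sum fun φ _ => h φ

lemma sumAbs_comm (u v : StrongDual ℝ E → ℝ) (l : List (StrongDual ℝ E)) :
    sumAbs (u - v) l = sumAbs (v - u) l := by
  rw [sumAbs, sumAbs]
  congr 1
  apply List.map_congr_left
  intro φ _
  rw [Pi.sub_apply, Pi.sub_apply, abs_sub_comm]

lemma admissible_bound {l : List (StrongDual ℝ E)} (hl : Admissible l) (x : E) :
    (l.map fun φ => |φ x|).sum ≤ ‖x‖ := by
  rcases eq_or_ne x 0 with rfl | hx
  · have h0 : (l.map fun φ => |φ (0 : E)|) = l.map fun _ => (0 : ℝ) :=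
      List.map_congr_left (by intro φ _; simp)
    rw [h0]
    simp
  · have hnx : (0 : ℝ) < ‖x‖ := norm_pos_iff.mpr hx
    have h1 := hl (‖x‖⁻¹ • x) (by
      rw [norm_smul, norm_inv, norm_norm]
      exact le_of_eq (inv_mul_cancel₀ hnx.ne'))
    have h2 : (l.map fun φ => |φ (‖x‖⁻¹ • x)|) = l.map fun φ => ‖x‖⁻¹ * |φ x| :=
      List.map_congr_left (by
        intro φ _
        rw [map_smul, smul_eq_mul, abs_mul, abs_of_pos (inv_pos.mpr hnx)])
    rw [h2, sum_map_mul] at h1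
    calc (l.map fun φ => |φ x|).sum = ‖x‖ * (‖x‖⁻¹ * (l.map fun φ => |φ x|).sum) := by
          field_simp
    _ ≤ ‖x‖ * 1 := by
          apply mul_le_mul_of_nonneg_left h1 hnx.le
    _ = ‖x‖ := mul_one _

lemma fblNorm_le_of_bound {f : StrongDual ℝ E → ℝ} {B : ℝ}
    (h : ∀ l, Admissible l → sumAbs f l ≤ B) : fblNorm f ≤ ENNReal.ofReal B :=
  iSup_le fun l => ENNReal.ofReal_le_ofReal (h l.1 l.2)

lemma sumAbs_le_of_fblNorm {f : StrongDual ℝ E → ℝ} {B : ℝ} (hB : 0 ≤ B)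
    (h : fblNorm f ≤ ENNReal.ofReal B) {l : List (StrongDual ℝ E)} (hl : Admissible l) :
    sumAbs f l ≤ B := by
  have h1 : ENNReal.ofReal (sumAbs f l) ≤ ENNReal.ofReal B :=
    le_trans (le_iSup (fun l : {l : List (StrongDual ℝ E) // Admissible l} =>
      ENNReal.ofReal ((l.1.map (fun φ => |f φ|)).sum)) ⟨l, hl⟩) h
  exact (ENNReal.ofReal_le_ofReal_iff hB).mp h1

lemma sumAbs_le_toReal {f : StrongDual ℝ E → ℝ} (hf : fblNorm f ≠ ⊤)
    {l : List (StrongDual ℝ E)} (hl : Admissible l) : sumAbs f l ≤ (fblNorm f).toReal := by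
  have h1 : ENNReal.ofReal (sumAbs f l) ≤ fblNorm f :=
    le_iSup (fun l : {l : List (StrongDual ℝ E) // Admissible l} =>
      ENNReal.ofReal ((l.1.map (fun φ => |f φ|)).sum)) ⟨l, hl⟩
  have h2 := ENNReal.toReal_mono hf h1
  rwa [ENNReal.toReal_ofReal (sumAbs_nonneg f l)] at h2

lemma sum_map_abs_nonneg (L : List ℝ) : 0 ≤ (L.map abs).sum := by
  apply List.sum_nonneg
  intro x hx
  obtain ⟨y, _, rfl⟩ := List.mem_map.mp hx
  exact abs_nonneg y

lemma abs_fsup_le (t : ℝ) (L : List ℝ) : |fsup t L| ≤ |t| + (L.map abs).sum := by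
  induction L with
  | nil => simp
  | cons x L ih =>
    simp only [fsup_cons, List.map_cons, List.sum_cons]
    have h1 : |x ⊔ fsup t L| ≤ |x| ⊔ |fsup t L| := by
      rw [sup_eq_max, sup_eq_max]
      exact abs_max_le_max_abs_abs
    have h2 : (0:ℝ) ≤ (L.map abs).sum := sum_map_abs_nonneg L
    have h3 : |x| ⊔ |fsup t L| ≤ |t| + (|x| + (L.map abs).sum) := by
      apply sup_le
      · linarith [abs_nonneg t]
      · linarith [abs_nonneg x]
    linarith

end Main
section Main2
open NormedSpace
variable {E : Type*} [NormedAddCommGroup E] [NormedSpace ℝ E]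
variable {X : Type*} [NormedAddCommGroup X] [Lattice X] [HasSolidNorm X] [IsOrderedAddMonoid X] [NormedSpace ℝ X]

/-- interpretation in `X` via `T`. -/
def J (T : E →L[ℝ] X) (r : Rep E) : X := r.interp (fun x => T x)

lemma hS_dm_add : ∀ x y : E, dm (x + y) = dm x + dm y := dm_add

variable (T : E →L[ℝ] X)

lemma hS_T_add : ∀ x y : E, (fun x : E => T x) (x + y) = (fun x : E => T x) x + (fun x : E => T x) y :=
  fun x y => map_add T x y

/-- existence of a representation for elements of the generated lattice. -/
lemma exists_rep {f : StrongDual ℝ E → ℝ} (hf : GenLat E f) : ∃ r : Rep E, f = r.interp dm := by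
  induction hf with
  | delta x => exact ⟨Rep.delta x, (Rep.interp_delta dm_zero x).symm⟩
  | add hf hg ihf ihg =>
    obtain ⟨r, rfl⟩ := ihf
    obtain ⟨s, rfl⟩ := ihg
    exact ⟨r.addR s, (Rep.interp_add hS_dm_add r s).symm⟩
  | smul c hf ih =>
    obtain ⟨r, rfl⟩ := ih
    rcases le_or_gt 0 c with hc | hc
    · exact ⟨r.smulR c, (Rep.interp_smul (dm_smul c) (pi_smul_sup c hc) r).symm⟩
    · refine ⟨(r.nega).smulR (-c), ?_⟩
      rw [Rep.interp_smul (dm_smul (-c)) (pi_smul_sup (-c) (by linarith)) r.nega,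
        Rep.interp_nega hS_dm_add]
      rw [smul_neg, neg_smul, neg_neg]
  | sup hf hg ihf ihg =>
    obtain ⟨r, rfl⟩ := ihf
    obtain ⟨s, rfl⟩ := ihg
    exact ⟨r.supR s, (Rep.interp_sup hS_dm_add r s).symm⟩

/-- admissible-sum bound for interpretations: finiteness of the FBL norm on the lattice. -/
lemma sumsum {l : List (StrongDual ℝ E)} (hl : Admissible l) (V : List E) :
    (l.map fun φ => (V.map fun x => |φ x|).sum).sum ≤ (V.map norm).sum := by
  induction V with
  | nil => simp
  | cons x V ih =>
    simp only [List.map_cons, List.sum_cons]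
    have h1 : (l.map fun φ => |φ x| + (V.map fun x => |φ x|).sum).sum =
        (l.map fun φ => |φ x|).sum + (l.map fun φ => (V.map fun x => |φ x|).sum).sum :=
      sum_map_add l _ _
    rw [h1]
    exact add_le_add (admissible_bound hl x) ih

lemma rep_bound (r : Rep E) :
    ∃ B : ℝ, 0 ≤ B ∧ ∀ l, Admissible l → sumAbs (r.interp dm) l ≤ B := by
  refine ⟨((r.a :: r.A).map norm).sum + ((r.b :: r.B).map norm).sum, ?_, ?_⟩
  · have h1 : 0 ≤ ((r.a :: r.A).map norm).sum :=
      List.sum_nonneg (by intro x hx; obtain ⟨y, _, rfl⟩ := List.mem_map.mp hx; exact norm_nonneg y)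
    have h2 : 0 ≤ ((r.b :: r.B).map norm).sum :=
      List.sum_nonneg (by intro x hx; obtain ⟨y, _, rfl⟩ := List.mem_map.mp hx; exact norm_nonneg y)
    linarith
  · intro l hl
    have hpt : ∀ φ : StrongDual ℝ E, |r.interp dm φ| ≤
        ((r.a :: r.A).map fun x => |φ x|).sum + ((r.b :: r.B).map fun x => |φ x|).sum := by
      intro φ
      rw [interp_dm_apply]
      refine (abs_sub _ _).trans ?_
      apply add_le_add
      · have := abs_fsup_le (φ r.a) (r.A.map φ)
        simpa [List.map_cons, List.map_map, Function.comp_def] using this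
      · have := abs_fsup_le (φ r.b) (r.B.map φ)
        simpa [List.map_cons, List.map_map, Function.comp_def] using this
    calc sumAbs (r.interp dm) l
        ≤ (l.map fun φ => ((r.a :: r.A).map fun x => |φ x|).sum +
            ((r.b :: r.B).map fun x => |φ x|).sum).sum :=
          List.sum_le_sum fun φ _ => hpt φ
    _ = (l.map fun φ => ((r.a :: r.A).map fun x => |φ x|).sum).sum +
          (l.map fun φ => ((r.b :: r.B).map fun x => |φ x|).sum).sum := sum_map_add l _ _
    _ ≤ ((r.a :: r.A).map norm).sum + ((r.b :: r.B).map norm).sum :=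
          add_le_add (sumsum hl _) (sumsum hl _)

open Classical in
/-- turn a dominated positive functional composed with `T` into a dual element. -/
noncomputable def toDual (z : X →ₗ[ℝ] ℝ) : StrongDual ℝ E :=
  if h : ∃ C, ∀ x : E, ‖(z.comp (T : E →ₗ[ℝ] X)) x‖ ≤ C * ‖x‖ then
    (z.comp (T : E →ₗ[ℝ] X)).mkContinuousOfExistsBound h else 0

lemma toDual_apply (z : X →ₗ[ℝ] ℝ) (h : ∃ C : ℝ, ∀ x : E, ‖z (T x)‖ ≤ C * ‖x‖) (x : E) :
    toDual T z x = z (T x) := by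
  have h' : ∃ C, ∀ x : E, ‖(z.comp (T : E →ₗ[ℝ] X)) x‖ ≤ C * ‖x‖ := h
  rw [toDual, dif_pos h']
  rfl

lemma sum_map_sub {α : Type*} (l : List α) (f g : α → ℝ) :
    (l.map fun x => f x - g x).sum = (l.map f).sum - (l.map g).sum := by
  induction l with
  | nil => simp
  | cons x l ih => simp [ih]; ring

/-- The key estimate. -/
lemma est (y : X →ₗ[ℝ] ℝ) (hy : IsPos y) (hyb : ∀ x, y x ≤ ‖x‖) (r : Rep E) {B : ℝ}
    (hB : 0 ≤ B) (h : ∀ l, Admissible l → sumAbs (r.interp dm) l ≤ B) :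
    y (J T r) ≤ ‖T‖ * B := by
  by_cases hT : ‖T‖ = 0
  · have hT0 : ∀ x : E, T x = 0 := by
      intro x
      have h1 := T.le_opNorm x
      rw [hT, zero_mul] at h1
      exact norm_le_zero_iff.mp h1
    have hfz : ∀ (v : E) (V : List E), fsup ((fun x : E => T x) v) (V.map fun x : E => T x) = 0 := by
      intro v V
      apply le_antisymm
      · refine fsup_le_iff.mpr ⟨(hT0 v).le, ?_⟩
        intro w hw
        obtain ⟨x, _, rfl⟩ := List.mem_map.mp hw
        exact (hT0 x).le
      · calc (0 : X) = T v := (hT0 v).symm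
        _ ≤ fsup ((fun x : E => T x) v) (V.map fun x : E => T x) :=
            le_fsup_self ((fun x : E => T x) v) (V.map fun x : E => T x)
    have hJ : J T r = 0 := by
      rw [J, Rep.interp, hfz, hfz, sub_zero]
    rw [hJ, map_zero, hT, zero_mul]
  · have hTpos : 0 < ‖T‖ := lt_of_le_of_ne (norm_nonneg T) (Ne.symm hT)
    obtain ⟨y0, ys, hlen, hy0, hys, hsum, hval⟩ :=
      dec y hy (T r.a) (r.A.map fun x : E => T x)
    -- each member of y0 :: ys is dominated by y on nonnegative elements
    have hz_le : ∀ z ∈ y0 :: ys, ∀ w : X, 0 ≤ w → z w ≤ y w := by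
      intro z hz w hw
      have hsw := hsum w
      have hnn : ∀ u ∈ ys.map (fun z => z w), 0 ≤ u := by
        intro u hu
        obtain ⟨z', hz', rfl⟩ := List.mem_map.mp hu
        exact hys z' hz' w hw
      rcases List.mem_cons.mp hz with rfl | hz
      · have := List.sum_nonneg hnn
        linarith
      · obtain ⟨l1, l2, rfl⟩ := List.append_of_mem hz
        have hsplit : ((l1 ++ z :: l2).map fun z' => z' w).sum =
            (l1.map fun z' => z' w).sum + (z w + (l2.map fun z' => z' w).sum) := by
          rw [List.map_append, List.sum_append, List.map_cons, List.sum_cons]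
        have h1 : 0 ≤ (l1.map fun z' => z' w).sum :=
          List.sum_nonneg (by
            intro u hu; obtain ⟨z', hz', rfl⟩ := List.mem_map.mp hu
            exact hys z' (by simp [hz']) w hw)
        have h2 : 0 ≤ (l2.map fun z' => z' w).sum :=
          List.sum_nonneg (by
            intro u hu; obtain ⟨z', hz', rfl⟩ := List.mem_map.mp hu
            exact hys z' (by simp [hz']) w hw)
        have h3 : 0 ≤ y0 w := hy0 w hw
        rw [hsplit] at hsw
        linarith
    have hzpos : ∀ z ∈ y0 :: ys, IsPos z := by
      intro z hz
      rcases List.mem_cons.mp hz with rfl | hz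
      exacts [hy0, hys z hz]
    -- boundedness of z ∘ T for z in the list
    have hzbdd : ∀ z ∈ y0 :: ys, ∃ C : ℝ, ∀ x : E, ‖z (T x)‖ ≤ C * ‖x‖ := by
      intro z hz
      refine ⟨‖T‖, fun x => ?_⟩
      rw [Real.norm_eq_abs]
      calc |z (T x)| ≤ z |T x| := (hzpos z hz).abs_apply_le (T x)
      _ ≤ y |T x| := hz_le z hz _ (abs_nonneg _)
      _ ≤ ‖(|T x|)‖ := hyb _
      _ = ‖T x‖ := norm_abs_eq_norm _
      _ ≤ ‖T‖ * ‖x‖ := T.le_opNorm x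
    have htd : ∀ z ∈ y0 :: ys, ∀ x : E, toDual T z x = z (T x) := by
      intro z hz x
      exact toDual_apply T z (hzbdd z hz) x
    -- the admissible list
    set l : List (StrongDual ℝ E) := (y0 :: ys).map (fun z => ‖T‖⁻¹ • toDual T z) with hldef
    have hsum_apply : ∀ w : X, ((y0 :: ys).map fun z => z w).sum = y w := by
      intro w
      rw [List.map_cons, List.sum_cons]
      exact hsum w
    have hadm : Admissible l := by
      intro x hx
      have hmm : (l.map fun φ => |φ x|) = (y0 :: ys).map fun z => ‖T‖⁻¹ * |z (T x)| := by
        rw [hldef, List.map_map]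
        apply List.map_congr_left
        intro z hz
        simp only [Function.comp]
        rw [ContinuousLinearMap.smul_apply, htd z hz x]
        rw [smul_eq_mul, abs_mul, abs_of_pos (inv_pos.mpr hTpos)]
      rw [hmm]
      have hstep : ((y0 :: ys).map fun z => ‖T‖⁻¹ * |z (T x)|).sum ≤
          ((y0 :: ys).map fun z => ‖T‖⁻¹ * z |T x|).sum := by
        apply List.sum_le_sum
        intro z hz
        apply mul_le_mul_of_nonneg_left ((hzpos z hz).abs_apply_le (T x)) (inv_nonneg.mpr hTpos.le)
      refine hstep.trans ?_
      rw [sum_map_mul]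
      have : ((y0 :: ys).map fun z => z |T x|).sum = y |T x| := hsum_apply _
      rw [this]
      calc ‖T‖⁻¹ * y |T x| ≤ ‖T‖⁻¹ * (‖T‖ * ‖x‖) := by
            apply mul_le_mul_of_nonneg_left ?_ (inv_nonneg.mpr hTpos.le)
            exact (hyb _).trans (by rw [norm_abs_eq_norm]; exact T.le_opNorm x)
      _ = ‖x‖ := by field_simp
      _ ≤ 1 := hx
    -- abbreviations
    set Q : X := fsup ((fun x : E => T x) r.b) (r.B.map fun x : E => T x) with hQdef
    -- per-element estimate
    have helem : ∀ z ∈ y0 :: ys, ∀ w ∈ (T r.a) :: (r.A.map fun x : E => T x),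
        z w - z Q ≤ r.interp dm (toDual T z) := by
      intro z hz w hw
      have hip : r.interp dm (toDual T z) =
          fsup (z (T r.a)) (r.A.map fun x => z (T x)) -
            fsup (z (T r.b)) (r.B.map fun x => z (T x)) := by
        rw [interp_dm_apply]
        congr 1
        · rw [htd z hz r.a]
          congr 1
          apply List.map_congr_left
          intro x _
          exact htd z hz x
        · rw [htd z hz r.b]
          congr 1
          apply List.map_congr_left
          intro x _
          exact htd z hz x
      rw [hip]
      have h1 : z w ≤ fsup (z (T r.a)) (r.A.map fun x => z (T x)) := by
        rcases List.mem_cons.mp hw with rfl | hw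
        · exact le_fsup_self _ _
        · obtain ⟨x, hx, rfl⟩ := List.mem_map.mp hw
          exact le_fsup_of_mem (List.mem_map.mpr ⟨x, hx, rfl⟩)
      have h2 : fsup (z (T r.b)) (r.B.map fun x => z (T x)) ≤ z Q := by
        refine fsup_le_iff.mpr ⟨?_, ?_⟩
        · exact (hzpos z hz).mono (le_fsup_self _ _)
        · intro u hu
          obtain ⟨x, hx, rfl⟩ := List.mem_map.mp hu
          exact (hzpos z hz).mono (le_fsup_of_mem (List.mem_map.mpr ⟨x, hx, rfl⟩))
      exact sub_le_sub h1 h2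
    -- assemble
    set V : List X := r.A.map fun x : E => T x with hVdef
    have hyJ : y (J T r) = (y0 (T r.a) + ((ys.zip V).map fun p => p.1 p.2).sum) -
        (y0 Q + ((ys.map fun z => z Q)).sum) := by
      rw [J, Rep.interp, map_sub]
      congr 1
      · exact hval.symm
      · exact (hsum Q).symm
    have hmain : y (J T r) ≤ ((y0 :: ys).map fun z => r.interp dm (toDual T z)).sum := by
      rw [hyJ, List.map_cons, List.sum_cons]
      have hc1 : y0 (T r.a) - y0 Q ≤ r.interp dm (toDual T y0) :=
        helem y0 (by simp) (T r.a) (by simp)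
      have hc2 : ((ys.zip V).map fun p => p.1 p.2).sum - (ys.map fun z => z Q).sum ≤
          (ys.map fun z => r.interp dm (toDual T z)).sum := by
        have hzq : (ys.map fun z => z Q).sum = ((ys.zip V).map fun p => p.1 Q).sum := by
          have hfst : (ys.zip V).map Prod.fst = ys :=
            List.map_fst_zip (l₁ := ys) (l₂ := V) (by rw [hlen])
          calc (ys.map fun z => z Q).sum
              = (((ys.zip V).map Prod.fst).map fun z => z Q).sum := by rw [hfst]
          _ = ((ys.zip V).map fun p => p.1 Q).sum := by rw [List.map_map]; rfl
        rw [hzq, ← sum_map_sub]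
        have hiz : ((ys.zip V).map fun p => p.1 p.2 - p.1 Q).sum ≤
            ((ys.zip V).map fun p => r.interp dm (toDual T p.1)).sum := by
          apply List.sum_le_sum
          rintro ⟨z, w⟩ hp
          have hzmem : z ∈ ys := (List.of_mem_zip hp).1
          have hwmem : w ∈ V := (List.of_mem_zip hp).2
          exact helem z (List.mem_cons_of_mem _ hzmem)
            w (List.mem_cons_of_mem _ (hVdef ▸ hwmem))
        have hfst : (ys.zip V).map Prod.fst = ys := List.map_fst_zip (l₁ := ys) (l₂ := V) (by rw [hlen])
        have heq : ((ys.zip V).map fun p => r.interp dm (toDual T p.1)).sum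
            = (ys.map fun z => r.interp dm (toDual T z)).sum := by
          conv_rhs => rw [← hfst]
          rw [List.map_map]
          rfl
        exact hiz.trans (le_of_eq heq)
      linarith
    -- scale and conclude
    have hz1 : ∀ z : X →ₗ[ℝ] ℝ,
        r.interp dm (toDual T z) = ‖T‖ * r.interp dm (‖T‖⁻¹ • toDual T z) := by
      intro z
      have h1 := interp_dm_poshom r (norm_nonneg T) (‖T‖⁻¹ • toDual T z)
      rw [smul_smul, mul_inv_cancel₀ hTpos.ne', one_smul] at h1
      exact h1
    have hscale : ((y0 :: ys).map fun z => r.interp dm (toDual T z)).sum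
        = ‖T‖ * ((y0 :: ys).map fun z => r.interp dm (‖T‖⁻¹ • toDual T z)).sum := by
      calc ((y0 :: ys).map fun z => r.interp dm (toDual T z)).sum
          = ((y0 :: ys).map fun z => ‖T‖ * r.interp dm (‖T‖⁻¹ • toDual T z)).sum := by
            exact congrArg List.sum (List.map_congr_left fun z _ => hz1 z)
      _ = ‖T‖ * ((y0 :: ys).map fun z => r.interp dm (‖T‖⁻¹ • toDual T z)).sum :=
            sum_map_mul _ _ _
    have habs : ((y0 :: ys).map fun z => r.interp dm (‖T‖⁻¹ • toDual T z)).sum ≤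
        sumAbs (r.interp dm) l := by
      rw [sumAbs, hldef, List.map_map]
      apply List.sum_le_sum
      intro z _
      exact le_abs_self _
    calc y (J T r) ≤ ((y0 :: ys).map fun z => r.interp dm (toDual T z)).sum := hmain
    _ = ‖T‖ * ((y0 :: ys).map fun z => r.interp dm (‖T‖⁻¹ • toDual T z)).sum := hscale
    _ ≤ ‖T‖ * sumAbs (r.interp dm) l := mul_le_mul_of_nonneg_left habs (norm_nonneg T)
    _ ≤ ‖T‖ * B := mul_le_mul_of_nonneg_left (h l hadm) (norm_nonneg T)

end Main2
section Main3
open NormedSpace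
variable {E : Type*} [NormedAddCommGroup E] [NormedSpace ℝ E]
variable {X : Type*} [NormedAddCommGroup X] [Lattice X] [HasSolidNorm X] [IsOrderedAddMonoid X] [NormedSpace ℝ X]
variable (T : E →L[ℝ] X)

lemma J_dist (r s : Rep E) {B : ℝ} (hB : 0 ≤ B)
    (h : ∀ l, Admissible l → sumAbs (r.interp dm - s.interp dm) l ≤ B) :
    ‖J T r - J T s‖ ≤ ‖T‖ * B := by
  set q : Rep E := r.addR s.nega with hqdef
  have hq_fun : q.interp dm = r.interp dm - s.interp dm := by
    rw [hqdef, Rep.interp_add hS_dm_add, Rep.interp_nega hS_dm_add, sub_eq_add_neg]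
  have hq_X : J T q = J T r - J T s := by
    rw [J, hqdef, Rep.interp_add (hS_T_add T), Rep.interp_nega (hS_T_add T), sub_eq_add_neg]
    rfl
  have habs_pt : ∀ φ, (q.absR).interp dm φ = |q.interp dm φ| := by
    intro φ
    rw [show q.absR = q.supR q.nega from rfl, Rep.interp_sup hS_dm_add,
      Rep.interp_nega hS_dm_add, Pi.sup_apply, Pi.neg_apply]
    rfl
  have habs_X : J T q.absR = J T q ⊔ -(J T q) := by
    rw [J, show q.absR = q.supR q.nega from rfl, Rep.interp_sup (hS_T_add T),
      Rep.interp_nega (hS_T_add T)]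
    rfl
  have hv'pos : 0 ≤ J T q ⊔ -(J T q) := by
    have h2 : (0 : X) ≤ 2 • (J T q ⊔ -(J T q)) := by
      rw [two_smul]
      calc (0 : X) = J T q + (-(J T q)) := by abel
      _ ≤ (J T q ⊔ -(J T q)) + (J T q ⊔ -(J T q)) := add_le_add le_sup_left le_sup_right
    exact nonneg_of_nsmul (by norm_num) h2
  obtain ⟨y, hy, hyb, hyv⟩ := norming (J T q ⊔ -(J T q)) hv'pos
  have hbound : ∀ l, Admissible l → sumAbs (q.absR.interp dm) l ≤ B := by
    intro l hl
    have heq : sumAbs (q.absR.interp dm) l = sumAbs (r.interp dm - s.interp dm) l := by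
      rw [sumAbs, sumAbs]
      congr 1
      apply List.map_congr_left
      intro φ _
      rw [habs_pt φ, abs_abs, hq_fun]
    rw [heq]
    exact h l hl
  have hest := est T y hy hyb q.absR hB hbound
  have hnorm : ‖J T q ⊔ -(J T q)‖ = ‖J T q‖ := by
    rw [show J T q ⊔ -(J T q) = |J T q| from rfl]
    exact norm_abs_eq_norm _
  calc ‖J T r - J T s‖ = ‖J T q‖ := by rw [← hq_X]
  _ = ‖J T q ⊔ -(J T q)‖ := hnorm.symm
  _ = y (J T q ⊔ -(J T q)) := hyv.symm
  _ = y (J T q.absR) := by rw [habs_X]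
  _ ≤ ‖T‖ * B := hest

open Classical in
noncomputable def Phi0 (f : StrongDual ℝ E → ℝ) : X :=
  if h : GenLat E f then J T (exists_rep h).choose else 0

lemma Phi0_eq {f : StrongDual ℝ E → ℝ} (hf : GenLat E f) {r : Rep E} (hr : f = r.interp dm) :
    Phi0 T f = J T r := by
  unfold Phi0
  rw [dif_pos hf]
  have hcs := (exists_rep hf).choose_spec
  have h0 : ∀ l, Admissible l →
      sumAbs ((exists_rep hf).choose.interp dm - r.interp dm) l ≤ 0 := by
    intro l hl
    have hzz : ∀ φ, ((exists_rep hf).choose.interp dm - r.interp dm) φ = 0 := by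
      intro φ
      rw [Pi.sub_apply, ← hcs, ← hr]
      ring
    rw [sumAbs, show (l.map fun φ => |((exists_rep hf).choose.interp dm - r.interp dm) φ|)
        = l.map fun _ => (0:ℝ) from List.map_congr_left fun φ _ => by rw [hzz]; simp]
    simp
  have hd := J_dist T _ r le_rfl h0
  rw [mul_zero] at hd
  exact sub_eq_zero.mp (norm_le_zero_iff.mp hd)

lemma Phi0_delta (x : E) : Phi0 T (fun φ => φ x) = T x := by
  have hf : GenLat E (fun φ => φ x) := GenLat.delta x
  have h1 := Phi0_eq T hf (r := Rep.delta x) (Rep.interp_delta dm_zero x).symm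
  rw [h1, J, Rep.interp_delta (map_zero T)]

lemma Phi0_add {f g : StrongDual ℝ E → ℝ} (hf : GenLat E f) (hg : GenLat E g) :
    Phi0 T (f + g) = Phi0 T f + Phi0 T g := by
  obtain ⟨r, hr⟩ := exists_rep hf
  obtain ⟨s, hs⟩ := exists_rep hg
  rw [Phi0_eq T hf hr, Phi0_eq T hg hs,
    Phi0_eq T (GenLat.add hf hg) (r := r.addR s)
      (by rw [hr, hs, Rep.interp_add hS_dm_add]),
    J, Rep.interp_add (hS_T_add T)]
  rfl

lemma Phi0_sup {f g : StrongDual ℝ E → ℝ} (hf : GenLat E f) (hg : GenLat E g) :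
    Phi0 T (f ⊔ g) = Phi0 T f ⊔ Phi0 T g := by
  obtain ⟨r, hr⟩ := exists_rep hf
  obtain ⟨s, hs⟩ := exists_rep hg
  rw [Phi0_eq T hf hr, Phi0_eq T hg hs,
    Phi0_eq T (GenLat.sup hf hg) (r := r.supR s)
      (by rw [hr, hs, Rep.interp_sup hS_dm_add]),
    J, Rep.interp_sup (hS_T_add T)]
  rfl

lemma Phi0_smul (c : ℝ) {f : StrongDual ℝ E → ℝ} (hf : GenLat E f) :
    Phi0 T (c • f) = c • Phi0 T f := by
  obtain ⟨r, hr⟩ := exists_rep hf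
  rcases le_or_gt 0 c with hc | hc
  · rw [Phi0_eq T hf hr,
      Phi0_eq T (GenLat.smul c hf) (r := r.smulR c)
        (by rw [hr, Rep.interp_smul (dm_smul c) (pi_smul_sup c hc)]),
      J, Rep.interp_smul (fun x => map_smul T c x) (fun p q => smul_sup'' hc p q)]
    rfl
  · rw [Phi0_eq T hf hr]
    have hrep : c • f = ((r.nega).smulR (-c)).interp dm := by
      rw [Rep.interp_smul (dm_smul (-c)) (pi_smul_sup (-c) (by linarith)),
        Rep.interp_nega hS_dm_add, ← hr, smul_neg, neg_smul, neg_neg]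
    rw [Phi0_eq T (GenLat.smul c hf) hrep, J,
      Rep.interp_smul (fun x => map_smul T (-c) x) (fun p q => smul_sup'' (by linarith) p q),
      Rep.interp_nega (hS_T_add T), smul_neg, neg_smul, neg_neg]
    rfl

lemma Phi0_norm {f : StrongDual ℝ E → ℝ} (hf : GenLat E f) {B : ℝ} (hB : 0 ≤ B)
    (h : ∀ l, Admissible l → sumAbs f l ≤ B) : ‖Phi0 T f‖ ≤ ‖T‖ * B := by
  obtain ⟨r, hr⟩ := exists_rep hf
  rw [Phi0_eq T hf hr]
  have h0 : ∀ l, Admissible l → sumAbs (r.interp dm - (Rep.delta (0:E)).interp dm) l ≤ B := by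
    intro l hl
    have heq : r.interp dm - (Rep.delta (0:E)).interp dm = f := by
      rw [Rep.interp_delta dm_zero, dm_zero, ← hr, sub_zero]
    rw [show sumAbs (r.interp dm - (Rep.delta (0:E)).interp dm) l = sumAbs f l from by rw [heq]]
    exact h l hl
  have hd := J_dist T r (Rep.delta 0) hB h0
  have hJ0 : J T (Rep.delta (0:E)) = 0 := by
    rw [J, Rep.interp_delta (map_zero T)]
    exact map_zero T
  rw [hJ0, sub_zero] at hd
  exact hd

lemma genlat_fblmem {f : StrongDual ℝ E → ℝ} (hf : GenLat E f) : FBLMem f := by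
  intro ε hε
  refine ⟨f, hf, ?_⟩
  rw [sub_self]
  refine le_trans (fblNorm_le_of_bound (B := 0) ?_) (by simp)
  intro l hl
  rw [sumAbs, show (l.map fun φ => |(0 : StrongDual ℝ E → ℝ) φ|) = l.map fun _ => (0:ℝ) from
    List.map_congr_left fun φ _ => by simp]
  simp

end Main3
section Main4
open NormedSpace
variable {E : Type*} [NormedAddCommGroup E] [NormedSpace ℝ E]
variable {X : Type*} [NormedAddCommGroup X] [Lattice X] [HasSolidNorm X] [IsOrderedAddMonoid X] [NormedSpace ℝ X] [CompleteSpace X]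
variable (T : E →L[ℝ] X)

lemma fblmem_genlat_sub {f g : StrongDual ℝ E → ℝ} (hf : FBLMem f) (hg : GenLat E g) :
    FBLMem (f - g) := by
  intro ε hε
  obtain ⟨u, hu, hub⟩ := hf ε hε
  refine ⟨u - g, ?_, ?_⟩
  · have h1 : GenLat E (u + (-1 : ℝ) • g) := GenLat.add hu (GenLat.smul (-1) hg)
    have h2 : u + (-1 : ℝ) • g = u - g := by
      funext φ
      simp [sub_eq_add_neg]
    rwa [h2] at h1
  · have h3 : f - g - (u - g) = f - u := by
      funext φ
      simp only [Pi.sub_apply]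
      ring
    rwa [h3]

lemma fblmem_add {f g : StrongDual ℝ E → ℝ} (hf : FBLMem f) (hg : FBLMem g) : FBLMem (f + g) := by
  intro ε hε
  obtain ⟨u, hu, hub⟩ := hf (ε/2) (by positivity)
  obtain ⟨v, hv, hvb⟩ := hg (ε/2) (by positivity)
  refine ⟨u + v, GenLat.add hu hv, ?_⟩
  apply fblNorm_le_of_bound
  intro l hl
  have h1 := sumAbs_le_of_fblNorm (by positivity) hub hl
  have h2 := sumAbs_le_of_fblNorm (by positivity) hvb hl
  have hpt : ∀ φ, |(f + g - (u + v)) φ| ≤ |(f - u) φ| + |(g - v) φ| := by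
    intro φ
    simp only [Pi.add_apply, Pi.sub_apply]
    calc |f φ + g φ - (u φ + v φ)| = |(f φ - u φ) + (g φ - v φ)| := by ring_nf
    _ ≤ |f φ - u φ| + |g φ - v φ| := abs_add_le _ _
  calc sumAbs (f + g - (u + v)) l ≤ sumAbs (f - u) l + sumAbs (g - v) l := sumAbs_le_add hpt l
  _ ≤ ε/2 + ε/2 := add_le_add h1 h2
  _ = ε := by ring

lemma sumAbs_smul (c : ℝ) (f g : StrongDual ℝ E → ℝ) (l : List (StrongDual ℝ E)) :
    sumAbs (c • f - c • g) l = |c| * sumAbs (f - g) l := by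
  rw [sumAbs, sumAbs, ← sum_map_mul]
  congr 1
  apply List.map_congr_left
  intro φ _
  simp only [Pi.sub_apply, Pi.smul_apply, smul_eq_mul]
  rw [← mul_sub, abs_mul]

lemma fblmem_smul (c : ℝ) {f : StrongDual ℝ E → ℝ} (hf : FBLMem f) : FBLMem (c • f) := by
  intro ε hε
  obtain ⟨u, hu, hub⟩ := hf (ε / (1 + |c|)) (by positivity)
  refine ⟨c • u, GenLat.smul c hu, ?_⟩
  apply fblNorm_le_of_bound
  intro l hl
  have h1 := sumAbs_le_of_fblNorm (by positivity) hub hl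
  rw [sumAbs_smul]
  have hc1 : (0:ℝ) < 1 + |c| := by positivity
  calc |c| * sumAbs (f - u) l ≤ |c| * (ε / (1 + |c|)) :=
        mul_le_mul_of_nonneg_left h1 (abs_nonneg c)
  _ ≤ ε := by
        rw [div_eq_mul_inv]
        have h2 : |c| * (ε * (1 + |c|)⁻¹) = (|c| / (1 + |c|)) * ε := by ring
        rw [h2]
        have h3 : |c| / (1 + |c|) ≤ 1 := by
          rw [div_le_one hc1]
          linarith [abs_nonneg c]
        nlinarith [hε.le]

lemma fblmem_sup {f g : StrongDual ℝ E → ℝ} (hf : FBLMem f) (hg : FBLMem g) : FBLMem (f ⊔ g) := by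
  intro ε hε
  obtain ⟨u, hu, hub⟩ := hf (ε/2) (by positivity)
  obtain ⟨v, hv, hvb⟩ := hg (ε/2) (by positivity)
  refine ⟨u ⊔ v, GenLat.sup hu hv, ?_⟩
  apply fblNorm_le_of_bound
  intro l hl
  have h1 := sumAbs_le_of_fblNorm (by positivity) hub hl
  have h2 := sumAbs_le_of_fblNorm (by positivity) hvb hl
  have hpt : ∀ φ, |(f ⊔ g - u ⊔ v) φ| ≤ |(f - u) φ| + |(g - v) φ| := by
    intro φ
    simp only [Pi.sub_apply, Pi.sup_apply, sup_eq_max]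
    calc |max (f φ) (g φ) - max (u φ) (v φ)| ≤ max |f φ - u φ| |g φ - v φ| :=
          abs_max_sub_max_le_max _ _ _ _
    _ ≤ |f φ - u φ| + |g φ - v φ| :=
          max_le (le_add_of_nonneg_right (abs_nonneg _)) (le_add_of_nonneg_left (abs_nonneg _))
  calc sumAbs (f ⊔ g - u ⊔ v) l ≤ sumAbs (f - u) l + sumAbs (g - v) l := sumAbs_le_add hpt l
  _ ≤ ε/2 + ε/2 := add_le_add h1 h2
  _ = ε := by ring

/-- canonical approximating sequence of a member of the closure. -/
noncomputable def aseq {f : StrongDual ℝ E → ℝ} (hf : FBLMem f) (n : ℕ) : StrongDual ℝ E → ℝ :=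
  (hf (1/(n+1)) (by positivity)).choose

lemma aseq_genlat {f : StrongDual ℝ E → ℝ} (hf : FBLMem f) (n : ℕ) : GenLat E (aseq hf n) :=
  (hf (1/(n+1)) (by positivity)).choose_spec.1

lemma aseq_fbl {f : StrongDual ℝ E → ℝ} (hf : FBLMem f) (n : ℕ) :
    fblNorm (f - aseq hf n) ≤ ENNReal.ofReal (1/(n+1)) :=
  (hf (1/(n+1)) (by positivity)).choose_spec.2

lemma aseq_bound {f : StrongDual ℝ E → ℝ} (hf : FBLMem f) (n : ℕ) :
    ∀ l, Admissible l → sumAbs (f - aseq hf n) l ≤ 1/(n+1) := fun l hl =>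
  sumAbs_le_of_fblNorm (by positivity) (aseq_fbl hf n) hl

lemma Phi0_dist {u v : StrongDual ℝ E → ℝ} (hu : GenLat E u) (hv : GenLat E v) {B : ℝ} (hB : 0 ≤ B)
    (h : ∀ l, Admissible l → sumAbs (u - v) l ≤ B) : ‖Phi0 T u - Phi0 T v‖ ≤ ‖T‖ * B := by
  obtain ⟨r, hr⟩ := exists_rep hu
  obtain ⟨s, hs⟩ := exists_rep hv
  rw [Phi0_eq T hu hr, Phi0_eq T hv hs]
  apply J_dist T r s hB
  intro l hl
  rw [show r.interp dm - s.interp dm = u - v from by rw [← hr, ← hs]]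
  exact h l hl

lemma one_div_mono_nat {n N : ℕ} (h : N ≤ n) : 1/((n:ℝ)+1) ≤ 1/((N:ℝ)+1) := by
  apply one_div_le_one_div_of_le (by positivity)
  have : (N:ℝ) ≤ (n:ℝ) := by exact_mod_cast h
  linarith

lemma phi_cauchy {f : StrongDual ℝ E → ℝ} (hf : FBLMem f) :
    CauchySeq (fun n => Phi0 T (aseq hf n)) := by
  apply cauchySeq_of_le_tendsto_0 (b := fun N : ℕ => ‖T‖ * (2 / (N + 1)))
  · intro n m N hn hm
    rw [dist_eq_norm]
    have hb : ∀ l, Admissible l →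
        sumAbs (aseq hf n - aseq hf m) l ≤ 1/(n+1) + 1/(m+1) := by
      intro l hl
      have h1 : sumAbs (aseq hf n - f) l ≤ 1/(n+1) := by
        rw [sumAbs_comm]
        exact aseq_bound hf n l hl
      have h2 := aseq_bound hf m l hl
      have hpt : ∀ φ, |(aseq hf n - aseq hf m) φ| ≤
          |(aseq hf n - f) φ| + |(f - aseq hf m) φ| := by
        intro φ
        simp only [Pi.sub_apply]
        calc |aseq hf n φ - aseq hf m φ|
            = |(aseq hf n φ - f φ) + (f φ - aseq hf m φ)| := by ring_nf
        _ ≤ _ := abs_add_le _ _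
      calc sumAbs (aseq hf n - aseq hf m) l
          ≤ sumAbs (aseq hf n - f) l + sumAbs (f - aseq hf m) l := sumAbs_le_add hpt l
      _ ≤ 1/(n+1) + 1/(m+1) := add_le_add h1 h2
    have hd := Phi0_dist T (aseq_genlat hf n) (aseq_genlat hf m) (by positivity) hb
    refine hd.trans ?_
    apply mul_le_mul_of_nonneg_left ?_ (norm_nonneg T)
    have e1 := one_div_mono_nat hn
    have e2 := one_div_mono_nat hm
    have e3 : 2/((N:ℝ)+1) = 1/((N:ℝ)+1) + 1/((N:ℝ)+1) := by ring
    linarith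
  · have h0 : Tendsto (fun N : ℕ => 2 / ((N:ℝ) + 1)) atTop (𝓝 0) := by
      have := tendsto_one_div_add_atTop_nhds_zero_nat.const_mul (2:ℝ)
      simpa [mul_one_div, div_eq_mul_inv] using this
    have := h0.const_mul ‖T‖
    simpa using this

open Classical in
noncomputable def Phi (f : StrongDual ℝ E → ℝ) : X :=
  if hf : FBLMem f then (cauchySeq_tendsto_of_complete (phi_cauchy T hf)).choose else 0

lemma Phi_tendsto {f : StrongDual ℝ E → ℝ} (hf : FBLMem f) :
    Tendsto (fun n => Phi0 T (aseq hf n)) atTop (𝓝 (Phi T f)) := by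
  unfold Phi
  rw [dif_pos hf]
  exact (cauchySeq_tendsto_of_complete (phi_cauchy T hf)).choose_spec

lemma Phi_dist {f : StrongDual ℝ E → ℝ} (hf : FBLMem f) {g : StrongDual ℝ E → ℝ} (hg : GenLat E g)
    {B : ℝ} (hB : 0 ≤ B) (h : ∀ l, Admissible l → sumAbs (f - g) l ≤ B) :
    ‖Phi T f - Phi0 T g‖ ≤ ‖T‖ * B := by
  have hb : ∀ n : ℕ, ‖Phi0 T (aseq hf n) - Phi0 T g‖ ≤ ‖T‖ * (B + 1/(n+1)) := by
    intro n
    apply Phi0_dist T (aseq_genlat hf n) hg (by positivity)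
    intro l hl
    have h1 : sumAbs (aseq hf n - f) l ≤ 1/(n+1) := by
      rw [sumAbs_comm]
      exact aseq_bound hf n l hl
    have hpt : ∀ φ, |(aseq hf n - g) φ| ≤ |(aseq hf n - f) φ| + |(f - g) φ| := by
      intro φ
      simp only [Pi.sub_apply]
      calc |aseq hf n φ - g φ| = |(aseq hf n φ - f φ) + (f φ - g φ)| := by ring_nf
      _ ≤ _ := abs_add_le _ _
    calc sumAbs (aseq hf n - g) l
        ≤ sumAbs (aseq hf n - f) l + sumAbs (f - g) l := sumAbs_le_add hpt l
    _ ≤ 1/(n+1) + B := add_le_add h1 (h l hl)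
    _ = B + 1/(n+1) := by ring
  have h1 : Tendsto (fun n => ‖Phi0 T (aseq hf n) - Phi0 T g‖) atTop
      (𝓝 ‖Phi T f - Phi0 T g‖) := ((Phi_tendsto T hf).sub tendsto_const_nhds).norm
  have h2 : Tendsto (fun n : ℕ => ‖T‖ * (B + 1/(n+1))) atTop (𝓝 (‖T‖ * (B + 0))) :=
    tendsto_const_nhds.mul (tendsto_const_nhds.add tendsto_one_div_add_atTop_nhds_zero_nat)
  rw [add_zero] at h2
  exact le_of_tendsto_of_tendsto' h1 h2 hb

lemma Phi_approx {f : StrongDual ℝ E → ℝ} (hf : FBLMem f) (n : ℕ) :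
    ‖Phi T f - Phi0 T (aseq hf n)‖ ≤ ‖T‖ * (1/(n+1)) :=
  Phi_dist T hf (aseq_genlat hf n) (by positivity) (aseq_bound hf n)

lemma Phi_genlat {f : StrongDual ℝ E → ℝ} (hf : GenLat E f) : Phi T f = Phi0 T f := by
  have h0 : ∀ l, Admissible l → sumAbs (f - f) l ≤ 0 := by
    intro l hl
    rw [sumAbs, show (l.map fun φ => |(f - f) φ|) = l.map fun _ => (0:ℝ) from
      List.map_congr_left fun φ _ => by simp]
    simp
  have hd := Phi_dist T (genlat_fblmem hf) hf le_rfl h0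
  rw [mul_zero] at hd
  exact sub_eq_zero.mp (norm_le_zero_iff.mp hd)

lemma eq_of_forall_norm_le (a b : X) (C : ℝ) (h : ∀ n : ℕ, ‖a - b‖ ≤ C * (1/(n+1))) :
    a = b := by
  have hlim : Tendsto (fun n : ℕ => C * (1/((n:ℝ)+1))) atTop (𝓝 0) := by
    have := tendsto_one_div_add_atTop_nhds_zero_nat.const_mul C
    simpa using this
  have hle := le_of_tendsto_of_tendsto' (f := fun _ : ℕ => ‖a - b‖)
    tendsto_const_nhds hlim h
  exact sub_eq_zero.mp (norm_le_zero_iff.mp hle)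

lemma fblmem_fblNorm_ne_top {f : StrongDual ℝ E → ℝ} (hf : FBLMem f) : fblNorm f ≠ ⊤ := by
  obtain ⟨u, hu, hub⟩ := hf 1 one_pos
  obtain ⟨r, hr⟩ := exists_rep hu
  obtain ⟨B, hB0, hB⟩ := rep_bound r
  have hb : ∀ l, Admissible l → sumAbs f l ≤ 1 + B := by
    intro l hl
    have h1 := sumAbs_le_of_fblNorm zero_le_one hub hl
    have h2 := hB l hl
    have hpt : ∀ φ, |f φ| ≤ |(f - u) φ| + |u φ| := by
      intro φ
      simp only [Pi.sub_apply]
      calc |f φ| = |(f φ - u φ) + u φ| := by ring_nf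
      _ ≤ _ := abs_add_le _ _
    calc sumAbs f l ≤ sumAbs (f - u) l + sumAbs u l := sumAbs_le_add hpt l
    _ ≤ 1 + B := add_le_add h1 (by rw [hr]; exact h2)
  exact ne_top_of_le_ne_top ENNReal.ofReal_ne_top (fblNorm_le_of_bound hb)

end Main4
end S18

/-- universal property of `FBL[E]`: every bounded operator `T : E → X` into a
Banach lattice `X` extends to a unique (bounded) lattice homomorphism `T̂ : FBL[E] → X` with
`T̂(δ_x) = T(x)` and `‖T̂‖ = ‖T‖`. Here `T̂` is encoded as a map on the members of `FBL[E]`,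
linear, sup-preserving, with `‖T̂ f‖ ≤ ‖T‖ ‖f‖_{FBL[E]}` (and `‖T‖` is attained, i.e. is the
least such bound), unique among such maps. -/
theorem stmt18 {E : Type*} [NormedAddCommGroup E] [NormedSpace ℝ E] [CompleteSpace E]
    {X : Type*} [NormedAddCommGroup X] [Lattice X] [HasSolidNorm X] [IsOrderedAddMonoid X] [NormedSpace ℝ X] [CompleteSpace X]
    (T : E →L[ℝ] X) :
    ∃ Φ : (StrongDual ℝ E → ℝ) → X,
      (∀ f g, FBLMem f → FBLMem g → Φ (f + g) = Φ f + Φ g) ∧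
      (∀ (c : ℝ) f, FBLMem f → Φ (c • f) = c • Φ f) ∧
      (∀ f g, FBLMem f → FBLMem g → Φ (f ⊔ g) = Φ f ⊔ Φ g) ∧
      (∀ x : E, Φ (fun φ => φ x) = T x) ∧
      (∀ f, FBLMem f → ‖Φ f‖ ≤ ‖T‖ * (fblNorm f).toReal) ∧
      (∀ C : ℝ, 0 ≤ C → (∀ f, FBLMem f → ‖Φ f‖ ≤ C * (fblNorm f).toReal) → ‖T‖ ≤ C) ∧
      (∀ Φ' : (StrongDual ℝ E → ℝ) → X,
        (∀ f g, FBLMem f → FBLMem g → Φ' (f + g) = Φ' f + Φ' g) →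
        (∀ (c : ℝ) f, FBLMem f → Φ' (c • f) = c • Φ' f) →
        (∀ f g, FBLMem f → FBLMem g → Φ' (f ⊔ g) = Φ' f ⊔ Φ' g) →
        (∀ x : E, Φ' (fun φ => φ x) = T x) →
        (∃ C : ℝ, ∀ f, FBLMem f → ‖Φ' f‖ ≤ C * (fblNorm f).toReal) →
        ∀ f, FBLMem f → Φ' f = Φ f) := by
  classical
  open S18 in
  refine ⟨S18.Phi T, ?_, ?_, ?_, ?_, ?_, ?_, ?_⟩
  -- additivity
  · intro f g hf hg
    apply eq_of_forall_norm_le _ _ (4 * ‖T‖)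
    intro n
    have h1 := Phi_approx T hf n
    have h2 := Phi_approx T hg n
    have h3 : ‖S18.Phi T (f + g) - Phi0 T (aseq hf n + aseq hg n)‖ ≤ ‖T‖ * (2 * (1/(n+1))) := by
      apply Phi_dist T (fblmem_add hf hg) (GenLat.add (aseq_genlat hf n) (aseq_genlat hg n))
        (by positivity)
      intro l hl
      have hpt : ∀ φ, |(f + g - (aseq hf n + aseq hg n)) φ| ≤
          |(f - aseq hf n) φ| + |(g - aseq hg n) φ| := by
        intro φ
        simp only [Pi.add_apply, Pi.sub_apply]
        calc |f φ + g φ - (aseq hf n φ + aseq hg n φ)|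
            = |(f φ - aseq hf n φ) + (g φ - aseq hg n φ)| := by ring_nf
        _ ≤ _ := abs_add_le _ _
      calc sumAbs (f + g - (aseq hf n + aseq hg n)) l
          ≤ sumAbs (f - aseq hf n) l + sumAbs (g - aseq hg n) l := sumAbs_le_add hpt l
      _ ≤ 1/(n+1) + 1/(n+1) := add_le_add (aseq_bound hf n l hl) (aseq_bound hg n l hl)
      _ = 2 * (1/(n+1)) := by ring
    have h4 : Phi0 T (aseq hf n + aseq hg n) = Phi0 T (aseq hf n) + Phi0 T (aseq hg n) :=
      Phi0_add T (aseq_genlat hf n) (aseq_genlat hg n)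
    have hsplit : S18.Phi T (f + g) - (S18.Phi T f + S18.Phi T g) =
        (S18.Phi T (f + g) - Phi0 T (aseq hf n + aseq hg n)) +
        ((Phi0 T (aseq hf n) - S18.Phi T f) + (Phi0 T (aseq hg n) - S18.Phi T g)) := by
      rw [h4]
      abel
    rw [hsplit]
    calc ‖_ + _‖ ≤ ‖S18.Phi T (f + g) - Phi0 T (aseq hf n + aseq hg n)‖ +
        ‖(Phi0 T (aseq hf n) - S18.Phi T f) + (Phi0 T (aseq hg n) - S18.Phi T g)‖ :=
          norm_add_le _ _
    _ ≤ ‖T‖ * (2 * (1/(n+1))) +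
        (‖Phi0 T (aseq hf n) - S18.Phi T f‖ + ‖Phi0 T (aseq hg n) - S18.Phi T g‖) :=
          add_le_add h3 (norm_add_le _ _)
    _ ≤ ‖T‖ * (2 * (1/(n+1))) + (‖T‖ * (1/(n+1)) + ‖T‖ * (1/(n+1))) := by
          have e1 : ‖Phi0 T (aseq hf n) - S18.Phi T f‖ ≤ ‖T‖ * (1/(n+1)) := by
            rw [norm_sub_rev]; exact h1
          have e2 : ‖Phi0 T (aseq hg n) - S18.Phi T g‖ ≤ ‖T‖ * (1/(n+1)) := by
            rw [norm_sub_rev]; exact h2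
          linarith
    _ = 4 * ‖T‖ * (1/(n+1)) := by ring
  -- homogeneity
  · intro c f hf
    apply eq_of_forall_norm_le _ _ ((|c| + |c|) * ‖T‖)
    intro n
    have h1 := Phi_approx T hf n
    have h3 : ‖S18.Phi T (c • f) - Phi0 T (c • aseq hf n)‖ ≤ ‖T‖ * (|c| * (1/(n+1))) := by
      apply Phi_dist T (fblmem_smul c hf) (GenLat.smul c (aseq_genlat hf n)) (by positivity)
      intro l hl
      rw [sumAbs_smul]
      exact mul_le_mul_of_nonneg_left (aseq_bound hf n l hl) (abs_nonneg c)
    have h4 : Phi0 T (c • aseq hf n) = c • Phi0 T (aseq hf n) :=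
      Phi0_smul T c (aseq_genlat hf n)
    have hsplit : S18.Phi T (c • f) - c • S18.Phi T f =
        (S18.Phi T (c • f) - Phi0 T (c • aseq hf n)) +
        c • (Phi0 T (aseq hf n) - S18.Phi T f) := by
      rw [h4, smul_sub]
      abel
    rw [hsplit]
    calc ‖_ + _‖ ≤ ‖S18.Phi T (c • f) - Phi0 T (c • aseq hf n)‖ +
        ‖c • (Phi0 T (aseq hf n) - S18.Phi T f)‖ := norm_add_le _ _
    _ ≤ ‖T‖ * (|c| * (1/(n+1))) + |c| * (‖T‖ * (1/(n+1))) := by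
          have e1 : ‖c • (Phi0 T (aseq hf n) - S18.Phi T f)‖ ≤ |c| * (‖T‖ * (1/(n+1))) := by
            rw [norm_smul, Real.norm_eq_abs]
            apply mul_le_mul_of_nonneg_left ?_ (abs_nonneg c)
            rw [norm_sub_rev]
            exact h1
          linarith
    _ = (|c| + |c|) * ‖T‖ * (1/(n+1)) := by ring
  -- sup
  · intro f g hf hg
    apply eq_of_forall_norm_le _ _ (4 * ‖T‖)
    intro n
    have h1 := Phi_approx T hf n
    have h2 := Phi_approx T hg n
    have h3 : ‖S18.Phi T (f ⊔ g) - Phi0 T (aseq hf n ⊔ aseq hg n)‖ ≤ ‖T‖ * (2 * (1/(n+1))) := by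
      apply Phi_dist T (fblmem_sup hf hg) (GenLat.sup (aseq_genlat hf n) (aseq_genlat hg n))
        (by positivity)
      intro l hl
      have hpt : ∀ φ, |(f ⊔ g - aseq hf n ⊔ aseq hg n) φ| ≤
          |(f - aseq hf n) φ| + |(g - aseq hg n) φ| := by
        intro φ
        simp only [Pi.sub_apply, Pi.sup_apply, sup_eq_max]
        calc |max (f φ) (g φ) - max (aseq hf n φ) (aseq hg n φ)|
            ≤ max |f φ - aseq hf n φ| |g φ - aseq hg n φ| := abs_max_sub_max_le_max _ _ _ _
        _ ≤ |f φ - aseq hf n φ| + |g φ - aseq hg n φ| :=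
              max_le (le_add_of_nonneg_right (abs_nonneg _)) (le_add_of_nonneg_left (abs_nonneg _))
      calc sumAbs (f ⊔ g - aseq hf n ⊔ aseq hg n) l
          ≤ sumAbs (f - aseq hf n) l + sumAbs (g - aseq hg n) l := sumAbs_le_add hpt l
      _ ≤ 1/(n+1) + 1/(n+1) := add_le_add (aseq_bound hf n l hl) (aseq_bound hg n l hl)
      _ = 2 * (1/(n+1)) := by ring
    have h4 : Phi0 T (aseq hf n ⊔ aseq hg n) = Phi0 T (aseq hf n) ⊔ Phi0 T (aseq hg n) :=
      Phi0_sup T (aseq_genlat hf n) (aseq_genlat hg n)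
    have h5 : ‖Phi0 T (aseq hf n) ⊔ Phi0 T (aseq hg n) - S18.Phi T f ⊔ S18.Phi T g‖ ≤
        ‖Phi0 T (aseq hf n) - S18.Phi T f‖ + ‖Phi0 T (aseq hg n) - S18.Phi T g‖ :=
      norm_sup_sub_sup_le_add_norm _ _ _ _
    have hsplit : S18.Phi T (f ⊔ g) - S18.Phi T f ⊔ S18.Phi T g =
        (S18.Phi T (f ⊔ g) - Phi0 T (aseq hf n ⊔ aseq hg n)) +
        (Phi0 T (aseq hf n) ⊔ Phi0 T (aseq hg n) - S18.Phi T f ⊔ S18.Phi T g) := by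
      rw [h4]
      abel
    rw [hsplit]
    calc ‖_ + _‖ ≤ ‖S18.Phi T (f ⊔ g) - Phi0 T (aseq hf n ⊔ aseq hg n)‖ +
        ‖Phi0 T (aseq hf n) ⊔ Phi0 T (aseq hg n) - S18.Phi T f ⊔ S18.Phi T g‖ :=
          norm_add_le _ _
    _ ≤ ‖T‖ * (2 * (1/(n+1))) + (‖T‖ * (1/(n+1)) + ‖T‖ * (1/(n+1))) := by
          have e1 : ‖Phi0 T (aseq hf n) - S18.Phi T f‖ ≤ ‖T‖ * (1/(n+1)) := by
            rw [norm_sub_rev]; exact h1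
          have e2 : ‖Phi0 T (aseq hg n) - S18.Phi T g‖ ≤ ‖T‖ * (1/(n+1)) := by
            rw [norm_sub_rev]; exact h2
          linarith
    _ = 4 * ‖T‖ * (1/(n+1)) := by ring
  -- delta
  · intro x
    rw [Phi_genlat T (GenLat.delta x), Phi0_delta]
  -- norm bound
  · intro f hf
    have hne := fblmem_fblNorm_ne_top hf
    have hBf0 : 0 ≤ (fblNorm f).toReal := ENNReal.toReal_nonneg
    have key : ∀ n : ℕ, ‖S18.Phi T f‖ ≤
        ‖T‖ * (fblNorm f).toReal + (2 * ‖T‖) * (1/(n+1)) := by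
      intro n
      have h1 := Phi_approx T hf n
      have h2 : ‖Phi0 T (aseq hf n)‖ ≤ ‖T‖ * ((fblNorm f).toReal + 1/(n+1)) := by
        apply Phi0_norm T (aseq_genlat hf n) (by positivity)
        intro l hl
        have h3 : sumAbs (aseq hf n - f) l ≤ 1/(n+1) := by
          rw [sumAbs_comm]
          exact aseq_bound hf n l hl
        have h4 : sumAbs f l ≤ (fblNorm f).toReal := sumAbs_le_toReal hne hl
        have hpt : ∀ φ, |aseq hf n φ| ≤ |(aseq hf n - f) φ| + |f φ| := by
          intro φ
          simp only [Pi.sub_apply]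
          calc |aseq hf n φ| = |(aseq hf n φ - f φ) + f φ| := by ring_nf
          _ ≤ _ := abs_add_le _ _
        calc sumAbs (aseq hf n) l ≤ sumAbs (aseq hf n - f) l + sumAbs f l :=
              sumAbs_le_add hpt l
        _ ≤ 1/(n+1) + (fblNorm f).toReal := add_le_add h3 h4
        _ = (fblNorm f).toReal + 1/(n+1) := by ring
      calc ‖S18.Phi T f‖
          = ‖(S18.Phi T f - Phi0 T (aseq hf n)) + Phi0 T (aseq hf n)‖ := by rw [sub_add_cancel]
      _ ≤ ‖S18.Phi T f - Phi0 T (aseq hf n)‖ + ‖Phi0 T (aseq hf n)‖ := norm_add_le _ _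
      _ ≤ ‖T‖ * (1/(n+1)) + ‖T‖ * ((fblNorm f).toReal + 1/(n+1)) := add_le_add h1 h2
      _ = ‖T‖ * (fblNorm f).toReal + (2 * ‖T‖) * (1/(n+1)) := by ring
    have hlim : Tendsto (fun n : ℕ => ‖T‖ * (fblNorm f).toReal + (2 * ‖T‖) * (1/((n:ℝ)+1)))
        atTop (𝓝 (‖T‖ * (fblNorm f).toReal + 0)) :=
      tendsto_const_nhds.add (by
        have := tendsto_one_div_add_atTop_nhds_zero_nat.const_mul (2 * ‖T‖)
        simpa using this)
    rw [add_zero] at hlim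
    exact le_of_tendsto_of_tendsto' (f := fun _ : ℕ => ‖S18.Phi T f‖) tendsto_const_nhds hlim key
  -- least bound
  · intro C hC hCb
    apply T.opNorm_le_bound hC
    intro x
    have hδ : FBLMem (fun φ : StrongDual ℝ E => φ x) := genlat_fblmem (GenLat.delta x)
    have h5 := hCb _ hδ
    have h6 : (fblNorm (fun φ : StrongDual ℝ E => φ x)).toReal ≤ ‖x‖ := by
      have h7 : fblNorm (fun φ : StrongDual ℝ E => φ x) ≤ ENNReal.ofReal ‖x‖ :=
        fblNorm_le_of_bound fun l hl => admissible_bound hl x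
      exact ENNReal.toReal_le_of_le_ofReal (norm_nonneg x) h7
    calc ‖T x‖ = ‖S18.Phi T (fun φ : StrongDual ℝ E => φ x)‖ := by
          rw [Phi_genlat T (GenLat.delta x), Phi0_delta]
    _ ≤ C * (fblNorm (fun φ : StrongDual ℝ E => φ x)).toReal := h5
    _ ≤ C * ‖x‖ := mul_le_mul_of_nonneg_left h6 hC
  -- uniqueness
  · rintro Φ' h'add h'smul h'sup h'delta ⟨C, hC⟩ f hf
    have hgen : ∀ g, GenLat E g → Φ' g = Phi0 T g := by
      intro g hg
      induction hg with
      | delta x => rw [h'delta, Phi0_delta]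
      | add h1 h2 ih1 ih2 =>
        rw [h'add _ _ (genlat_fblmem h1) (genlat_fblmem h2), ih1, ih2, Phi0_add T h1 h2]
      | smul c h1 ih => rw [h'smul c _ (genlat_fblmem h1), ih, Phi0_smul T c h1]
      | sup h1 h2 ih1 ih2 =>
        rw [h'sup _ _ (genlat_fblmem h1) (genlat_fblmem h2), ih1, ih2, Phi0_sup T h1 h2]
    apply eq_of_forall_norm_le _ _ (|C| + ‖T‖)
    intro n
    have hgu := aseq_genlat hf n
    have h1 := Phi_approx T hf n
    have hfu : FBLMem (f - aseq hf n) := fblmem_genlat_sub hf hgu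
    have h2 : Φ' f = Φ' (f - aseq hf n) + Φ' (aseq hf n) := by
      have h2' := h'add (f - aseq hf n) (aseq hf n) hfu (genlat_fblmem hgu)
      rw [sub_add_cancel] at h2'
      exact h2'
    have h3 : ‖Φ' (f - aseq hf n)‖ ≤ |C| * (1/(n+1)) := by
      have hb := hC (f - aseq hf n) hfu
      have h4 : (fblNorm (f - aseq hf n)).toReal ≤ 1/(n+1) :=
        ENNReal.toReal_le_of_le_ofReal (by positivity) (aseq_fbl hf n)
      calc ‖Φ' (f - aseq hf n)‖ ≤ C * (fblNorm (f - aseq hf n)).toReal := hb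
      _ ≤ |C| * (fblNorm (f - aseq hf n)).toReal :=
            mul_le_mul_of_nonneg_right (le_abs_self C) ENNReal.toReal_nonneg
      _ ≤ |C| * (1/(n+1)) := mul_le_mul_of_nonneg_left h4 (abs_nonneg C)
    have hcomb : Φ' f - S18.Phi T f =
        Φ' (f - aseq hf n) + (Phi0 T (aseq hf n) - S18.Phi T f) := by
      rw [h2, hgen _ hgu]
      abel
    rw [hcomb]
    calc ‖_ + _‖ ≤ ‖Φ' (f - aseq hf n)‖ + ‖Phi0 T (aseq hf n) - S18.Phi T f‖ := norm_add_le _ _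
    _ ≤ |C| * (1/(n+1)) + ‖T‖ * (1/(n+1)) := by
          have e1 : ‖Phi0 T (aseq hf n) - S18.Phi T f‖ ≤ ‖T‖ * (1/(n+1)) := by
            rw [norm_sub_rev]
            exact h1
          linarith
    _ = (|C| + ‖T‖) * (1/(n+1)) := by ring
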